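/- arXiv:0807.3939 — 12 statements merged into one kernel-verified Lean document; each statement's English description precedes it below -/
import Mathlib

section
/- Let x_1,...,x_k be real points outside the interval [-1,1], and let P̃ be the subspace of real polynomials p satisfying, for each i, a fixed nontrivial linear condition of the form sum_{j=0}^{r_i} a_{ij} p^{(j)}(x_i) = 0. Then P̃ is dense in C[-1,1] with respect to the supremum norm. -/
open Polynomial

set_option synthInstance.maxHeartbeats 1000000 in
set_option maxHeartbeats 1000000 in
/-- Let x_1,...,x_k be real points outside [-1,1], and let P̃ be the
subspace of real polynomials satisfying, for each i, a fixed nontrivial linear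
condition ∑_{j=0}^{r_i} a_{ij} p^{(j)}(x_i) = 0.  Then P̃ is dense in C[-1,1]
with the supremum norm. -/
theorem stmt_0 (k : ℕ) (x : Fin k → ℝ) (hx : ∀ i, x i ∉ Set.Icc (-1 : ℝ) 1)
    (r : Fin k → ℕ) (a : (i : Fin k) → Fin (r i + 1) → ℝ)
    (ha : ∀ i, ∃ j, a i j ≠ 0) :
    Dense {f : C(Set.Icc (-1 : ℝ) 1, ℝ) |
      ∃ p : Polynomial ℝ,
        (∀ i, ∑ j : Fin (r i + 1),
            a i j * ((fun q => Polynomial.derivative q)^[(j : ℕ)] p).eval (x i) = 0) ∧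
        ∀ t : Set.Icc (-1 : ℝ) 1, f t = p.eval (t : ℝ)} := by
  set I : Set ℝ := Set.Icc (-1 : ℝ) 1 with hI
  -- the polynomial vanishing to order r i + 1 at each x i
  set m : Polynomial ℝ := ∏ i : Fin k, (X - C (x i)) ^ (r i + 1) with hm
  have hmne : ∀ t : I, m.eval (t : ℝ) ≠ 0 := by
    intro t
    rw [hm, Polynomial.eval_prod]
    apply Finset.prod_ne_zero_iff.2
    intro i _
    simp only [Polynomial.eval_pow]
    apply pow_ne_zero
    simp only [Polynomial.eval_sub, Polynomial.eval_X, Polynomial.eval_C, sub_ne_zero]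
    intro h
    exact hx i (h ▸ t.2)
  -- the continuous map given by m and its pointwise inverse
  set mC : C(I, ℝ) := m.toContinuousMapOn I with hmC
  have hminv_cont : Continuous (fun t : I => (m.eval (t : ℝ))⁻¹) := by
    apply Continuous.inv₀
    · exact m.continuous.comp continuous_subtype_val
    · exact hmne
  set minv : C(I, ℝ) := ⟨fun t => (m.eval (t : ℝ))⁻¹, hminv_cont⟩ with hminv
  rw [Metric.dense_iff]
  intro f ε hε
  set g : C(I, ℝ) := f * minv with hg
  -- Weierstrass approximation for g
  have hgc : g ∈ closure (polynomialFunctions I : Set C(I, ℝ)) := by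
    have := polynomialFunctions_closure_eq_top (-1 : ℝ) 1
    have hmem : g ∈ (polynomialFunctions (Set.Icc (-1:ℝ) 1)).topologicalClosure := by
      rw [this]; trivial
    rwa [← SetLike.mem_coe, Subalgebra.topologicalClosure_coe] at hmem
  set M : ℝ := ‖mC‖ with hM
  have hMpos : (0:ℝ) < M + 1 := by positivity
  have hε' : (0:ℝ) < ε / (M + 1) := by positivity
  obtain ⟨h, hhmem, hdist⟩ := Metric.mem_closure_iff.1 hgc (ε / (M + 1)) hε'
  rw [polynomialFunctions_coe] at hhmem
  obtain ⟨s, rfl⟩ := hhmem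
  refine ⟨mC * s.toContinuousMapOn I, ?_, ?_⟩
  · -- it's in the ball
    rw [Metric.mem_ball, dist_comm]
    rcases lt_or_ge M 0 with hM0 | hM0
    · exact absurd (norm_nonneg mC) (not_le.2 hM0)
    rw [ContinuousMap.dist_lt_iff hε]
    intro t
    have hft : f t = m.eval (t : ℝ) * g t := by
      simp only [hg, ContinuousMap.mul_apply, hminv, ContinuousMap.coe_mk]
      rw [mul_comm (f t), ← mul_assoc, mul_inv_cancel₀ (hmne t), one_mul]
    have h1 : dist (f t) ((mC * s.toContinuousMapOn I) t)
        = |m.eval (t : ℝ)| * dist (g t) ((s.toContinuousMapOn I) t) := by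
      rw [hft, Real.dist_eq, Real.dist_eq]
      simp only [ContinuousMap.mul_apply, hmC, Polynomial.toContinuousMapOn_apply,
        Polynomial.toContinuousMap_apply]
      rw [← abs_mul]
      ring_nf
    rw [h1]
    have h2 : |m.eval (t : ℝ)| ≤ M := by
      have := mC.norm_coe_le_norm t
      simpa [hmC, Real.norm_eq_abs] using this
    have h3 : dist (g t) ((s.toContinuousMapOn I) t) ≤ dist g (s.toContinuousMapOn I) :=
      ContinuousMap.dist_apply_le_dist t
    calc |m.eval (t : ℝ)| * dist (g t) ((s.toContinuousMapOn I) t)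
        ≤ M * dist g (s.toContinuousMapOn I) := by
          apply mul_le_mul h2 h3 dist_nonneg (le_trans (abs_nonneg _) h2)
      _ ≤ M * (ε / (M + 1)) := by
          apply mul_le_mul_of_nonneg_left (le_of_lt hdist) hM0
      _ < ε := by
          rw [div_eq_inv_mul, ← mul_assoc]
          have : M * (M + 1)⁻¹ < 1 := by
            rw [mul_inv_lt_iff₀ hMpos]; linarith
          nlinarith
  · -- membership in the set
    refine ⟨m * s, ?_, ?_⟩
    · intro i
      have key : ∀ j : Fin (r i + 1),
          ((fun q => Polynomial.derivative q)^[(j : ℕ)] (m * s)).eval (x i) = 0 := by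
        intro j
        have hdvd : (X - C (x i)) ^ (r i + 1) ∣ m * s :=
          dvd_mul_of_dvd_left (Finset.dvd_prod_of_mem _ (Finset.mem_univ i)) s
        have hdvd2 : (X - C (x i)) ^ (r i + 1 - (j : ℕ)) ∣
            Polynomial.derivative^[(j : ℕ)] (m * s) :=
          Polynomial.pow_sub_dvd_iterate_derivative_of_pow_dvd _ hdvd
        have hj : (j : ℕ) < r i + 1 := j.2
        have h1le : 1 ≤ r i + 1 - (j : ℕ) := by omega
        have hdvd3 : (X - C (x i)) ∣ Polynomial.derivative^[(j : ℕ)] (m * s) :=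
          dvd_trans (dvd_pow_self _ (by omega : r i + 1 - (j : ℕ) ≠ 0)) hdvd2
        have := (Polynomial.dvd_iff_isRoot).1 hdvd3
        simpa [Polynomial.IsRoot] using this
      rw [Finset.sum_congr rfl (fun j _ => by rw [key j, mul_zero])]
      simp
    · intro t
      simp only [ContinuousMap.mul_apply, hmC, Polynomial.toContinuousMapOn_apply,
        Polynomial.toContinuousMap_apply, Polynomial.eval_mul]
end

section
/- For real b with |b|>1 and real a, the space E^{a,b} = {p polynomial : p'(b) + a·p(b) = 0} is dense in L^2([-1,1], W dx) where W(x) = (1-x)^α (1+x)^β/(x-b)^2 with α, β > -1. -/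
open MeasureTheory Polynomial
open scoped ENNReal



lemma aux_rpow_le (t γ : ℝ) (h1 : 1 ≤ t) (h2 : t ≤ 2) : t ^ γ ≤ max 1 ((2:ℝ) ^ γ) := by
  rcases le_or_gt 0 γ with hγ | hγ
  · exact le_max_of_le_right (Real.rpow_le_rpow (by linarith) h2 hγ)
  · exact le_max_of_le_left (Real.rpow_le_one_of_one_le_of_nonpos h1 hγ.le)

lemma aux_sq_ge {b x : ℝ} (hb : 1 < |b|) (hx : |x| ≤ 1) :
    (|b| - 1) ^ 2 ≤ (x - b) ^ 2 := by
  rw [← sq_abs (x - b)]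
  apply pow_le_pow_left₀ (by linarith)
  have h1 := abs_sub_abs_le_abs_sub b x
  have h2 : |b - x| = |x - b| := abs_sub_comm b x
  linarith

lemma W_int {α β b : ℝ} (hα : -1 < α) (hβ : -1 < β) (hb : 1 < |b|) :
    IntegrableOn (fun x : ℝ => (1 - x) ^ α * (1 + x) ^ β / (x - b) ^ 2)
      (Set.Ioo (-1:ℝ) 1) := by
  have hb1 : (0:ℝ) < |b| - 1 := by linarith
  have hK : (0:ℝ) < (|b| - 1) ^ 2 := by positivity
  set Mα := max 1 ((2:ℝ) ^ α) with hMα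
  set Mβ := max 1 ((2:ℝ) ^ β) with hMβ
  set K := ((|b| - 1) ^ 2)⁻¹ with hKdef
  have hKnn : 0 ≤ K := inv_nonneg.2 hK.le
  have h1 : IntegrableOn (fun x : ℝ => (1 - x) ^ α) (Set.Ioo (-1:ℝ) 1) := by
    have h := ((intervalIntegral.intervalIntegrable_rpow' hα (a := 0) (b := 2)).comp_sub_left 1).symm
    norm_num at h
    rwa [intervalIntegrable_iff_integrableOn_Ioo_of_le (by norm_num)] at h
  have h2 : IntegrableOn (fun x : ℝ => (1 + x) ^ β) (Set.Ioo (-1:ℝ) 1) := by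
    have h := (intervalIntegral.intervalIntegrable_rpow' hβ (a := 0) (b := 2)).comp_add_right 1
    norm_num at h
    rw [intervalIntegrable_iff_integrableOn_Ioo_of_le (by norm_num)] at h
    exact h.congr_fun (fun x _ => by rw [add_comm]) measurableSet_Ioo
  have hmeas : Measurable (fun x : ℝ => (1 - x) ^ α * (1 + x) ^ β / (x - b) ^ 2) := by
    fun_prop
  refine ((h1.const_mul (K * Mβ)).add (h2.const_mul (K * Mα))).mono'
    hmeas.aestronglyMeasurable ?_
  filter_upwards [ae_restrict_mem measurableSet_Ioo] with x hx
  obtain ⟨hx1, hx2⟩ := hx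
  have h1x : (0:ℝ) < 1 - x := by linarith
  have h2x : (0:ℝ) < 1 + x := by linarith
  have hA : (0:ℝ) ≤ (1 - x) ^ α := Real.rpow_nonneg h1x.le _
  have hB : (0:ℝ) ≤ (1 + x) ^ β := Real.rpow_nonneg h2x.le _
  have hWnn : 0 ≤ (1 - x) ^ α * (1 + x) ^ β / (x - b) ^ 2 :=
    div_nonneg (mul_nonneg hA hB) (sq_nonneg _)
  rw [Real.norm_eq_abs, abs_of_nonneg hWnn]
  have hsq := aux_sq_ge hb (abs_le.mpr ⟨hx1.le, hx2.le⟩)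
  have step1 : (1 - x) ^ α * (1 + x) ^ β / (x - b) ^ 2 ≤ ((1 - x) ^ α * (1 + x) ^ β) * K := by
    rw [div_eq_mul_inv]
    exact mul_le_mul_of_nonneg_left (inv_anti₀ hK hsq) (mul_nonneg hA hB)
  have prodle : (1 - x) ^ α * (1 + x) ^ β ≤ Mβ * (1 - x) ^ α + Mα * (1 + x) ^ β := by
    have hMαnn : (0:ℝ) ≤ Mα := le_trans zero_le_one (le_max_left _ _)
    have hMβnn : (0:ℝ) ≤ Mβ := le_trans zero_le_one (le_max_left _ _)
    rcases le_total x 0 with hx0 | hx0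
    · have hle : (1 - x) ^ α ≤ Mα := aux_rpow_le _ _ (by linarith) (by linarith)
      have : (1 - x) ^ α * (1 + x) ^ β ≤ Mα * (1 + x) ^ β :=
        mul_le_mul_of_nonneg_right hle hB
      nlinarith [mul_nonneg hMβnn hA]
    · have hle : (1 + x) ^ β ≤ Mβ := aux_rpow_le _ _ (by linarith) (by linarith)
      have : (1 - x) ^ α * (1 + x) ^ β ≤ (1 - x) ^ α * Mβ :=
        mul_le_mul_of_nonneg_left hle hA
      nlinarith [mul_nonneg hMαnn hB]
  calc (1 - x) ^ α * (1 + x) ^ β / (x - b) ^ 2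
      ≤ ((1 - x) ^ α * (1 + x) ^ β) * K := step1
    _ ≤ (Mβ * (1 - x) ^ α + Mα * (1 + x) ^ β) * K :=
        mul_le_mul_of_nonneg_right prodle hKnn
    _ = K * Mβ * (1 - x) ^ α + K * Mα * (1 + x) ^ β := by ring


lemma poly_memLp {μ : Measure ℝ} [IsFiniteMeasure μ]
    (hae : ∀ᵐ x ∂μ, x ∈ Set.Ioo (-1:ℝ) 1) (p : ℝ[X]) :
    MemLp (fun x => p.eval x) 2 μ := by
  obtain ⟨C, hC⟩ := (isCompact_Icc (a := (-1:ℝ)) (b := 1)).exists_bound_of_continuousOn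
    p.continuous_aeval.continuousOn
  refine MemLp.of_bound (p.continuous_aeval.aestronglyMeasurable) C ?_
  filter_upwards [hae] with x hx
  exact hC x ⟨hx.1.le, hx.2.le⟩

lemma dist_toLp_le {μ : Measure ℝ} [IsFiniteMeasure μ] {f g : ℝ → ℝ}
    (F G : Lp ℝ 2 μ) (hF : ∀ᵐ x ∂μ, F x = f x) (hG : ∀ᵐ x ∂μ, G x = g x)
    {C : ℝ} (hC0 : 0 ≤ C) (h : ∀ᵐ x ∂μ, ‖f x - g x‖ ≤ C) :
    dist F G ≤ (μ Set.univ ^ ((2:ℝ)⁻¹)).toReal * C := by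
  have hFG : (⇑F - ⇑G) =ᵐ[μ] fun x => f x - g x := by
    filter_upwards [hF, hG] with x h1 h2
    simp [h1, h2]
  have hfin : μ Set.univ ^ ((2:ℝ≥0∞).toReal)⁻¹ * ENNReal.ofReal C ≠ ⊤ :=
    ENNReal.mul_ne_top (ENNReal.rpow_ne_top_of_nonneg (by norm_num) (measure_ne_top μ _))
      ENNReal.ofReal_ne_top
  calc dist F G = (eLpNorm (fun x => f x - g x) 2 μ).toReal := by
        rw [Lp.dist_def, eLpNorm_congr_ae hFG]
    _ ≤ (μ Set.univ ^ ((2:ℝ≥0∞).toReal)⁻¹ * ENNReal.ofReal C).toReal :=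
        ENNReal.toReal_mono hfin (eLpNorm_le_of_ae_bound h)
    _ = (μ Set.univ ^ ((2:ℝ)⁻¹)).toReal * C := by
        rw [ENNReal.toReal_mul, ENNReal.toReal_ofReal hC0]
        norm_num


/-- For real b with |b|>1 (with a = (β-α)/2, b = (β+α)/(β-α)),
the space E^{a,b} = {p : p'(b) + a p(b) = 0} is dense in
L²([-1,1], W dx) where W(x) = (1-x)^α (1+x)^β / (x-b)², α,β > -1. -/
theorem stmt_1 (α β a b : ℝ) (hα : -1 < α) (hβ : -1 < β) (hne : α ≠ β)
    (hab : a = (β - α) / 2) (hbb : b = (β + α) / (β - α)) (hb : 1 < |b|) :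
    Dense {f : Lp ℝ 2
        ((volume.restrict (Set.Ioo (-1 : ℝ) 1)).withDensity
          (fun x => ENNReal.ofReal ((1 - x) ^ α * (1 + x) ^ β / (x - b) ^ 2))) |
      ∃ p : Polynomial ℝ,
        (Polynomial.derivative p).eval b + a * p.eval b = 0 ∧
        ∀ᵐ x ∂((volume.restrict (Set.Ioo (-1 : ℝ) 1)).withDensity
          (fun x => ENNReal.ofReal ((1 - x) ^ α * (1 + x) ^ β / (x - b) ^ 2))),
          f x = p.eval x} := by
  have hb1 : (0:ℝ) < |b| - 1 := by linarith
  have hbpos : (0:ℝ) < |b| := by linarith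
  have hbne : b ≠ 0 := by
    intro h
    rw [h, abs_zero] at hb
    linarith
  set μ := (volume.restrict (Set.Ioo (-1 : ℝ) 1)).withDensity
      (fun x => ENNReal.ofReal ((1 - x) ^ α * (1 + x) ^ β / (x - b) ^ 2)) with hμdef
  haveI : IsFiniteMeasure μ :=
    isFiniteMeasure_withDensity (W_int hα hβ hb).lintegral_lt_top.ne
  haveI : Fact ((1:ℝ≥0∞) ≤ 2) := ⟨one_le_two⟩
  have hae : ∀ᵐ x ∂μ, x ∈ Set.Ioo (-1:ℝ) 1 :=
    (withDensity_absolutelyContinuous _ _).ae_le (ae_restrict_mem measurableSet_Ioo)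
  set m := (μ Set.univ ^ ((2:ℝ)⁻¹)).toReal with hm
  have hm0 : 0 ≤ m := ENNReal.toReal_nonneg
  clear_value m
  intro f
  rw [Metric.mem_closure_iff]
  intro ε hε
  set δ := (ε/3)/(m+1) with hδ
  clear_value δ
  have hδpos : 0 < δ := by rw [hδ]; positivity
  have hmδ : m * δ < ε/3 := by
    have h1 : (m+1) * δ = ε/3 := by rw [hδ]; field_simp
    nlinarith [hδpos]
  -- Step 1: approximate by a bounded continuous function
  obtain ⟨g, hgnorm, hgmem⟩ := (Lp.memLp f).exists_boundedContinuous_eLpNorm_sub_le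
    (by norm_num : (2:ℝ≥0∞) ≠ ∞) (ε := ENNReal.ofReal (ε/3))
    (ENNReal.ofReal_pos.2 (by linarith)).ne'
  set G := hgmem.toLp g with hG
  have hdistfG : dist f G ≤ ε/3 := by
    rw [Lp.dist_def]
    have hcongr : eLpNorm (⇑f - ⇑G) 2 μ = eLpNorm (⇑f - ⇑g) 2 μ := by
      apply eLpNorm_congr_ae
      filter_upwards [hgmem.coeFn_toLp] with x hx
      simp [hG, hx]
    rw [hcongr]
    exact ENNReal.toReal_le_of_le_ofReal (by linarith) hgnorm
  -- Step 2: Weierstrass approximation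
  obtain ⟨p, hp⟩ := exists_polynomial_near_of_continuousOn (-1) 1 g
    g.continuous.continuousOn δ hδpos
  set P := (poly_memLp hae p).toLp _ with hP
  have hdistGP : dist G P ≤ m * δ := by
    rw [hm]
    apply dist_toLp_le G P hgmem.coeFn_toLp (poly_memLp hae p).coeFn_toLp hδpos.le
    filter_upwards [hae] with x hx
    have := hp x ⟨hx.1.le, hx.2.le⟩
    rw [Real.norm_eq_abs, abs_sub_comm]
    linarith
  -- Step 3: correction to satisfy the constraint
  obtain ⟨n, hn⟩ := exists_nat_gt (|b| * (|a| +
    |(Polynomial.derivative p).eval b + a * p.eval b| / δ + 1))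
  set c := (Polynomial.derivative p).eval b + a * p.eval b with hc
  clear_value c
  set D := ((n:ℝ)+1)/|b| - |a| with hD
  clear_value D
  have hcd0 : 0 ≤ |c| / δ := div_nonneg (abs_nonneg _) hδpos.le
  have hDgt : |c|/δ + 1 < D := by
    have h1 : |a| + |c|/δ + 1 < (n:ℝ)/|b| := by
      rw [lt_div_iff₀ hbpos]
      calc (|a| + |c|/δ + 1) * |b| = |b| * (|a| + |c|/δ + 1) := by ring
        _ < n := hn
    have h2 : (n:ℝ)/|b| ≤ ((n:ℝ)+1)/|b| := by gcongr <;> linarith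
    rw [hD]; linarith
  have hD0 : 0 < D := lt_trans (by linarith : (0:ℝ) < |c|/δ + 1) hDgt
  set k := ((n:ℝ)+1)/b + a with hk
  clear_value k
  have hkD : D ≤ |k| := by
    have h1 : |((n:ℝ)+1)/b| = ((n:ℝ)+1)/|b| := by
      rw [abs_div]
      congr 1
      rw [abs_of_nonneg (by positivity)]
    have h2 : |((n:ℝ)+1)/b| ≤ |k| + |a| := by
      have : ((n:ℝ)+1)/b = k + (-a) := by rw [hk]; ring
      rw [this]
      simpa using abs_add_le k (-a)
    rw [hD]; linarith
  have hkne : k ≠ 0 := by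
    intro h
    rw [h, abs_zero] at hkD
    linarith
  set e := (b^(n+1))⁻¹ * k⁻¹ with he
  clear_value e
  have hbp : b ^ (n+1) ≠ 0 := pow_ne_zero _ hbne
  have e1 : e * b ^ (n+1) = k⁻¹ := by
    rw [he]
    field_simp
  have e2 : e * (((n:ℝ)+1) * b ^ n) = ((n:ℝ)+1)/b * k⁻¹ := by
    rw [he, pow_succ]
    field_simp
  have key : e * (((n:ℝ)+1) * b ^ n) + a * (e * b ^ (n+1)) = 1 := by
    rw [e1, e2]
    have h3 : (((n:ℝ)+1)/b + a) * k⁻¹ = 1 := by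
      rw [← hk]; exact mul_inv_cancel₀ hkne
    linear_combination h3
  set q := p - C c * (C e * X^(n+1)) with hq
  have hqconstraint : (Polynomial.derivative q).eval b + a * q.eval b = 0 := by
    have hder : Polynomial.derivative q =
        Polynomial.derivative p - C c * (C e * (C (((n:ℝ)+1)) * X^n)) := by
      rw [hq]
      simp [derivative_sub, derivative_C_mul, derivative_X_pow]
    rw [hder, hq]
    simp only [eval_sub, eval_mul, eval_pow, eval_C, eval_X]
    linear_combination (-c) * key - hc
  have hbound : ∀ x ∈ Set.Icc (-1:ℝ) 1, ‖p.eval x - q.eval x‖ ≤ δ := by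
    intro x hx
    have hxa : |x| ≤ 1 := abs_le.mpr ⟨hx.1, hx.2⟩
    have hdiff : p.eval x - q.eval x = c * (e * x^(n+1)) := by
      rw [hq]; simp
    rw [hdiff, Real.norm_eq_abs, abs_mul, abs_mul, abs_pow]
    have hbinv : |(b^(n+1))⁻¹| ≤ 1 := by
      rw [abs_inv, abs_pow]
      exact inv_le_one_of_one_le₀ (one_le_pow₀ hb.le)
    have hkinv : |k⁻¹| ≤ D⁻¹ := by
      rw [abs_inv]
      exact inv_anti₀ hD0 hkD
    have hcD : |c| * D⁻¹ ≤ δ := by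
      rw [← div_eq_mul_inv, div_le_iff₀ hD0]
      have h4 := mul_lt_mul_of_pos_left hDgt hδpos
      have h5 : δ * (|c|/δ) = |c| := by
        rw [mul_comm]; exact div_mul_cancel₀ _ hδpos.ne'
      rw [mul_add, h5, mul_one] at h4
      linarith
    have h1e : |e| ≤ D⁻¹ := by
      rw [he, abs_mul]
      calc |(b^(n+1))⁻¹| * |k⁻¹| ≤ 1 * D⁻¹ :=
            mul_le_mul hbinv hkinv (abs_nonneg _) zero_le_one
        _ = D⁻¹ := one_mul _
    have h2e : |e| * |x|^(n+1) ≤ D⁻¹ := by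
      calc |e| * |x|^(n+1) ≤ D⁻¹ * 1 :=
            mul_le_mul h1e (pow_le_one₀ (abs_nonneg _) hxa) (by positivity)
              (inv_nonneg.2 hD0.le)
        _ = D⁻¹ := mul_one _
    calc |c| * (|e| * |x|^(n+1)) ≤ |c| * D⁻¹ :=
          mul_le_mul_of_nonneg_left h2e (abs_nonneg _)
      _ ≤ δ := hcD
  set Q := (poly_memLp hae q).toLp _ with hQ
  have hdistPQ : dist P Q ≤ m * δ := by
    rw [hm]
    apply dist_toLp_le P Q (poly_memLp hae p).coeFn_toLp (poly_memLp hae q).coeFn_toLp hδpos.le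
    filter_upwards [hae] with x hx
    exact hbound x ⟨hx.1.le, hx.2.le⟩
  refine ⟨Q, ⟨q, hqconstraint, (poly_memLp hae q).coeFn_toLp⟩, ?_⟩
  calc dist f Q ≤ dist f G + dist G P + dist P Q := dist_triangle4 f G P Q
    _ ≤ ε/3 + m*δ + m*δ := by gcongr
    _ < ε := by linarith
end

section
/- For k > 0, the space of real polynomials p with p(-k) = 0 is dense in the Hilbert space L^2([0,∞), x^k e^{-x} dx). -/
open MeasureTheory Polynomial

open Real Filter Set
open scoped ENNReal NNReal



-- L5: Taylor remainder for exp(-u)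
lemma exp_taylor_remainder : ∀ (N : ℕ) (u : ℝ), 0 ≤ u →
    |Real.exp (-u) - ∑ n ∈ Finset.range N, (-u)^n / n.factorial| ≤ u^N / N.factorial := by
  intro N
  induction N with
  | zero =>
    intro u hu
    simp [abs_of_nonneg (Real.exp_nonneg _), Real.exp_le_one_iff, neg_nonpos, hu]
  | succ N ih =>
    intro u hu
    set R : ℕ → ℝ → ℝ := fun M v => Real.exp (-v) - ∑ n ∈ Finset.range M, (-v)^n / n.factorial with hR
    have hderiv : ∀ v : ℝ, HasDerivAt (R (N+1)) (-(R N v)) v := by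
      intro v
      have h1 : HasDerivAt (fun v : ℝ => Real.exp (-v)) (-Real.exp (-v)) v := by
        simpa [Function.comp_def] using (Real.hasDerivAt_exp (-v)).comp v (hasDerivAt_neg v)
      have h2 : HasDerivAt (fun v : ℝ => ∑ n ∈ Finset.range (N+1), (-v)^n / n.factorial)
          (∑ n ∈ Finset.range (N+1), (-(n : ℝ) * (-v)^(n-1)) / n.factorial) v := by
        apply HasDerivAt.fun_sum
        intro n _
        have : HasDerivAt (fun v : ℝ => (-v)^n) ((n : ℝ) * (-v)^(n-1) * (-1)) v :=
          (hasDerivAt_pow n (-v)).comp v (hasDerivAt_neg v)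
        simpa [mul_comm, div_eq_mul_inv, mul_assoc, mul_left_comm] using this.div_const (n.factorial : ℝ)
      have hsum : (∑ n ∈ Finset.range (N+1), (-(n : ℝ) * (-v)^(n-1)) / n.factorial)
          = -(∑ n ∈ Finset.range N, (-v)^n / n.factorial) := by
        rw [Finset.sum_range_succ', ← Finset.sum_neg_distrib]
        have hterm : ∀ n ∈ Finset.range N,
            (-((n+1 : ℕ) : ℝ) * (-v)^((n+1)-1)) / ((n+1 : ℕ)).factorial
            = -((-v)^n / n.factorial) := by
          intro n _
          have h1 : ((n : ℝ)+1) ≠ 0 := by positivity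
          have h2 : ((n.factorial : ℝ)) ≠ 0 := by positivity
          rw [Nat.add_sub_cancel, Nat.factorial_succ]
          push_cast
          field_simp
        rw [Finset.sum_congr rfl hterm]
        simp
      exact (h1.sub h2).congr_deriv (by rw [hsum, hR]; ring)
    have hcont : ∀ M : ℕ, Continuous (R M) := by
      intro M
      apply Continuous.sub
      · exact Real.continuous_exp.comp continuous_neg
      · exact continuous_finset_sum _ fun n _ => ((continuous_neg.pow n).div_const _)
    have hzero : R (N+1) 0 = 0 := by
      simp only [hR, neg_zero, Real.exp_zero]
      rw [Finset.sum_eq_single 0]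
      · simp
      · intro n _ hn
        simp [zero_pow hn]
      · simp
    have hint : R (N+1) u = ∫ s in (0:ℝ)..u, -(R N s) := by
      rw [intervalIntegral.integral_eq_sub_of_hasDerivAt (fun x _ => hderiv x)
        (((hcont N).neg).intervalIntegrable 0 u), hzero, sub_zero]
    rw [show Real.exp (-u) - ∑ n ∈ Finset.range (N+1), (-u)^n / n.factorial = R (N+1) u from rfl,
      hint]
    calc |∫ s in (0:ℝ)..u, -(R N s)| ≤ ∫ s in (0:ℝ)..u, |(-(R N s))| := by
          apply intervalIntegral.abs_integral_le_integral_abs hu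
      _ ≤ ∫ s in (0:ℝ)..u, s^N / N.factorial := by
          apply intervalIntegral.integral_mono_on hu
          · exact ((hcont N).neg.abs).intervalIntegrable 0 u
          · exact (continuous_pow N |>.div_const _).intervalIntegrable 0 u
          · intro s hs
            rw [abs_neg]
            exact ih s hs.1
      _ = u^(N+1) / (N+1).factorial := by
          rw [intervalIntegral.integral_div, integral_pow]
          rw [Nat.factorial_succ]
          push_cast
          field_simp
          simp


lemma fact_ratio_tendsto (c0 : ℕ) :
    Tendsto (fun N : ℕ => Real.sqrt ((2*N + c0).factorial) / (4^N * N.factorial))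
      atTop (nhds 0) := by
  set b : ℕ → ℝ := fun N => ((2*N + c0).factorial : ℝ) / (16^N * (N.factorial)^2) with hb
  have hbpos : ∀ N, 0 < b N := by
    intro N
    apply div_pos (by positivity) (by positivity)
  have hb0 : Tendsto b atTop (nhds 0) := by
    apply (summable_of_ratio_norm_eventually_le (r := 9/16) (by norm_num) ?_).tendsto_atTop_zero
    filter_upwards [eventually_ge_atTop c0] with N hN
    rw [Real.norm_eq_abs, Real.norm_eq_abs, abs_of_pos (hbpos _), abs_of_pos (hbpos _)]
    have hfact : ((2*(N+1) + c0).factorial : ℝ)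
        = ((2*N+c0)+2) * ((2*N+c0)+1) * ((2*N+c0).factorial : ℝ) := by
      have : 2*(N+1) + c0 = ((2*N+c0)+1)+1 := by ring
      rw [this, Nat.factorial_succ, Nat.factorial_succ]
      push_cast
      ring
    have h1 : ((2*N+c0 : ℕ):ℝ) + 2 ≤ 3*(N+1) := by
      have : (c0 : ℝ) ≤ N := by exact_mod_cast hN
      push_cast
      linarith
    have h2 : ((2*N+c0 : ℕ):ℝ) + 1 ≤ 3*(N+1) := by
      have : (c0 : ℝ) ≤ N := by exact_mod_cast hN
      push_cast
      linarith
    rw [hb]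
    simp only
    rw [hfact, div_le_iff₀ (by positivity)]
    have hNf : (0:ℝ) < (N.factorial : ℝ) := by positivity
    have expand : (9/16 : ℝ) * (((2*N+c0).factorial : ℝ) / (16^N * (N.factorial)^2))
        * (16^(N+1) * ((N+1).factorial)^2)
        = (3*((N:ℝ)+1)) * (3*((N:ℝ)+1)) * ((2*N+c0).factorial : ℝ) := by
      rw [Nat.factorial_succ]
      push_cast
      field_simp
      ring
    rw [expand]
    have hnn : (0:ℝ) ≤ ((2*N+c0).factorial : ℝ) := by positivity
    have := mul_le_mul h1 h2 (by positivity) (by positivity)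
    push_cast at this
    exact mul_le_mul_of_nonneg_right this hnn
  have hsqrt : ∀ N, Real.sqrt ((2*N + c0).factorial) / (4^N * N.factorial)
      = Real.sqrt (b N) := by
    intro N
    rw [hb]
    simp only
    rw [Real.sqrt_div (by positivity) _]
    congr 1
    rw [show (16:ℝ)^N * (N.factorial:ℝ)^2 = ((4:ℝ)^N * N.factorial)^2 by
      rw [mul_pow, ← pow_mul, mul_comm N 2, pow_mul]; norm_num]
    exact (Real.sqrt_sq (by positivity : (0:ℝ) ≤ 4^N * N.factorial)).symm
  have : Tendsto (fun N => Real.sqrt (b N)) atTop (nhds 0) := by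
    have := (Real.continuous_sqrt.tendsto 0).comp hb0
    simpa [Function.comp_def] using this
  exact this.congr fun N => (hsqrt N).symm


noncomputable def mymu (k : ℝ) : Measure ℝ :=
  (volume.restrict (Set.Ioi (0 : ℝ))).withDensity
    (fun x => ENNReal.ofReal (x ^ k * Real.exp (-x)))

lemma gamma_int (j : ℕ) :
    IntegrableOn (fun x : ℝ => x^j * Real.exp (-x)) (Set.Ioi 0) volume ∧
    ∫ x in Set.Ioi (0:ℝ), x^j * Real.exp (-x) = (j.factorial : ℝ) := by
  have h0 : (0:ℝ) < (j:ℝ) + 1 := by positivity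
  have hcong : ∀ x ∈ Set.Ioi (0:ℝ),
      Real.exp (-x) * x ^ ((j:ℝ) + 1 - 1) = x^j * Real.exp (-x) := by
    intro x hx
    rw [show (j:ℝ) + 1 - 1 = (j:ℝ) by ring, Real.rpow_natCast]
    ring
  constructor
  · exact (Real.GammaIntegral_convergent h0).congr_fun hcong measurableSet_Ioi
  · rw [← setIntegral_congr_fun measurableSet_Ioi hcong]
    rw [← Real.Gamma_eq_integral h0]
    exact_mod_cast Real.Gamma_nat_eq_factorial j

lemma one_add_int (M : ℕ) :
    IntegrableOn (fun x : ℝ => (1+x)^M * Real.exp (-x)) (Set.Ioi 0) volume ∧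
    ∫ x in Set.Ioi (0:ℝ), (1+x)^M * Real.exp (-x) ≤ ((M+1).factorial : ℝ) := by
  have hexp : ∀ x : ℝ, (1+x)^M * Real.exp (-x)
      = ∑ j ∈ Finset.range (M+1), (M.choose j : ℝ) * (x^j * Real.exp (-x)) := by
    intro x
    rw [add_comm (1:ℝ) x, add_pow, Finset.sum_mul]
    apply Finset.sum_congr rfl
    intro j hj
    simp only [one_pow, mul_one]
    ring
  have hint : IntegrableOn
      (fun x : ℝ => ∑ j ∈ Finset.range (M+1), (M.choose j : ℝ) * (x^j * Real.exp (-x)))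
      (Set.Ioi 0) volume := by
    apply MeasureTheory.integrable_finset_sum
    intro j _
    exact ((gamma_int j).1.const_mul _)
  constructor
  · exact hint.congr_fun (fun x _ => (hexp x).symm) measurableSet_Ioi
  · rw [show (fun x : ℝ => (1+x)^M * Real.exp (-x))
        = (fun x : ℝ => ∑ j ∈ Finset.range (M+1), (M.choose j : ℝ) * (x^j * Real.exp (-x)))
      from funext hexp]
    rw [integral_finset_sum _ (fun j _ => ((gamma_int j).1.const_mul _))]
    have : ∀ j ∈ Finset.range (M+1),
        ∫ x in Set.Ioi (0:ℝ), (M.choose j : ℝ) * (x^j * Real.exp (-x))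
        = (M.choose j : ℝ) * j.factorial := by
      intro j _
      rw [integral_const_mul, (gamma_int j).2]
    rw [Finset.sum_congr rfl this]
    have hle : ∀ j ∈ Finset.range (M+1), (M.choose j : ℝ) * j.factorial ≤ (M.factorial : ℝ) := by
      intro j hj
      have hjM : j ≤ M := Nat.lt_succ_iff.mp (Finset.mem_range.mp hj)
      have h1 := Nat.choose_mul_factorial_mul_factorial hjM
      have h2 : M.choose j * j.factorial ≤ M.factorial := by
        calc M.choose j * j.factorial ≤ M.choose j * j.factorial * (M - j).factorial :=
              Nat.le_mul_of_pos_right _ (Nat.factorial_pos _)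
          _ = M.factorial := h1
      exact_mod_cast h2
    calc ∑ j ∈ Finset.range (M+1), (M.choose j : ℝ) * j.factorial
        ≤ ∑ _j ∈ Finset.range (M+1), (M.factorial : ℝ) := Finset.sum_le_sum hle
      _ = (M+1) * M.factorial := by simp [Finset.sum_const, mul_comm]
      _ = ((M+1).factorial : ℝ) := by rw [Nat.factorial_succ]; push_cast; ring
lemma mymu_ae (k : ℝ) : ∀ᵐ x ∂(mymu k), x ∈ Set.Ioi (0:ℝ) :=
  (withDensity_absolutelyContinuous _ _).ae_le (ae_restrict_mem measurableSet_Ioi)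

lemma weight_meas (k : ℝ) : Measurable (fun x : ℝ => ENNReal.ofReal (x ^ k * Real.exp (-x))) := by
  apply ENNReal.measurable_ofReal.comp
  exact (measurable_id.pow_const _).mul (Real.continuous_exp.comp continuous_neg).measurable

lemma xk_le (k : ℝ) (hk : 0 < k) {x : ℝ} (hx : 0 < x) : x ^ k ≤ (1+x)^(⌈k⌉₊ : ℕ) := by
  calc x ^ k ≤ (1+x) ^ k := Real.rpow_le_rpow hx.le (by linarith) hk.le
    _ ≤ (1+x) ^ ((⌈k⌉₊ : ℕ) : ℝ) :=
        Real.rpow_le_rpow_of_exponent_le (by linarith) (Nat.le_ceil k)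
    _ = (1+x)^(⌈k⌉₊ : ℕ) := Real.rpow_natCast _ _

lemma master_bound (k : ℝ) (hk : 0 < k) {g : ℝ → ℝ} {c : ℝ} (hc : 0 ≤ c) (m : ℕ)
    (hg : ∀ x ∈ Set.Ioi (0:ℝ), |g x| ≤ c * (1+x)^m) :
    eLpNorm g 2 (mymu k) ≤
      ENNReal.ofReal (c * Real.sqrt ((2*m + ⌈k⌉₊ + 1).factorial)) := by
  set K := ⌈k⌉₊ with hK
  set M := 2*m + K with hM
  set h : ℝ → ℝ := fun x => c * (1+x)^m with hh
  have step1 : eLpNorm g 2 (mymu k) ≤ eLpNorm h 2 (mymu k) := by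
    apply eLpNorm_mono_ae
    filter_upwards [mymu_ae k] with x hx
    rw [Real.norm_eq_abs, Real.norm_eq_abs]
    exact (hg x hx).trans (le_abs_self _)
  have hmeas : Measurable (fun x : ℝ => (‖h x‖₊ : ℝ≥0∞) ^ (2:ℝ)) := by
    apply Measurable.pow_const
    exact (measurable_coe_nnreal_ennreal.comp
      ((continuous_const.mul ((continuous_const.add continuous_id).pow m)).measurable.nnnorm))
  have step2 : eLpNorm h 2 (mymu k)
      = (∫⁻ x in Set.Ioi (0:ℝ), ENNReal.ofReal (x ^ k * Real.exp (-x)) *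
          ((‖h x‖₊ : ℝ≥0∞) ^ (2:ℝ)) ∂volume) ^ (1/(2:ℝ)) := by
    rw [eLpNorm_eq_lintegral_rpow_enorm_toReal (by norm_num) (by norm_num)]
    simp only [enorm_eq_nnnorm]
    rw [show ((2:ℝ≥0∞).toReal) = (2:ℝ) by simp]
    rw [mymu, lintegral_withDensity_eq_lintegral_mul _ (weight_meas k) hmeas]
    rfl
  have bound3 : ∀ x ∈ Set.Ioi (0:ℝ),
      ENNReal.ofReal (x ^ k * Real.exp (-x)) * ((‖h x‖₊ : ℝ≥0∞) ^ (2:ℝ))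
      ≤ ENNReal.ofReal (c^2 * (1+x)^M * Real.exp (-x)) := by
    intro x hx
    have hx0 : (0:ℝ) < x := hx
    have h1x : (0:ℝ) ≤ 1 + x := by linarith
    have hhx : 0 ≤ h x := by positivity
    rw [show ((‖h x‖₊ : ℝ≥0∞)) = ENNReal.ofReal (h x) by
      rw [← enorm_eq_nnnorm, ← ofReal_norm, Real.norm_eq_abs, abs_of_nonneg hhx]]
    rw [ENNReal.ofReal_rpow_of_nonneg hhx (by norm_num)]
    rw [← ENNReal.ofReal_mul (by positivity)]
    apply ENNReal.ofReal_le_ofReal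
    have hpow2 : (h x) ^ (2:ℝ) = c^2 * (1+x)^(2*m) := by
      rw [show (2:ℝ) = ((2:ℕ):ℝ) by norm_num, Real.rpow_natCast, hh]
      rw [mul_pow, ← pow_mul, mul_comm m 2]
    rw [hpow2]
    have hxk := xk_le k hk hx0
    calc x ^ k * Real.exp (-x) * (c^2 * (1+x)^(2*m))
        ≤ (1+x)^(K:ℕ) * Real.exp (-x) * (c^2 * (1+x)^(2*m)) := by
          apply mul_le_mul_of_nonneg_right _ (by positivity)
          exact mul_le_mul_of_nonneg_right hxk (Real.exp_nonneg _)
      _ = c^2 * (1+x)^M * Real.exp (-x) := by rw [hM, pow_add]; ring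
  have step4 : (∫⁻ x in Set.Ioi (0:ℝ), ENNReal.ofReal (x ^ k * Real.exp (-x)) *
          ((‖h x‖₊ : ℝ≥0∞) ^ (2:ℝ)) ∂volume)
      ≤ ENNReal.ofReal (c^2 * ((M+1).factorial : ℝ)) := by
    calc _ ≤ ∫⁻ x in Set.Ioi (0:ℝ), ENNReal.ofReal (c^2 * (1+x)^M * Real.exp (-x)) ∂volume :=
          setLIntegral_mono' measurableSet_Ioi bound3
      _ = ENNReal.ofReal (∫ x in Set.Ioi (0:ℝ), c^2 * (1+x)^M * Real.exp (-x)) := by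
          rw [← ofReal_integral_eq_lintegral_ofReal]
          · have : (fun x : ℝ => c^2 * (1+x)^M * Real.exp (-x))
                = (fun x : ℝ => c^2 * ((1+x)^M * Real.exp (-x))) := by
              funext x; ring
            rw [this]
            exact ((one_add_int M).1.const_mul _)
          · filter_upwards [ae_restrict_mem measurableSet_Ioi] with x hx
            have : (0:ℝ) < x := hx
            positivity
      _ ≤ ENNReal.ofReal (c^2 * ((M+1).factorial : ℝ)) := by
          apply ENNReal.ofReal_le_ofReal
          have : (fun x : ℝ => c^2 * (1+x)^M * Real.exp (-x))
              = (fun x : ℝ => c^2 * ((1+x)^M * Real.exp (-x))) := by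
            funext x; ring
          rw [this, integral_const_mul]
          exact mul_le_mul_of_nonneg_left (one_add_int M).2 (by positivity)
  calc eLpNorm g 2 (mymu k) ≤ eLpNorm h 2 (mymu k) := step1
    _ ≤ (ENNReal.ofReal (c^2 * ((M+1).factorial : ℝ))) ^ (1/(2:ℝ)) := by
        rw [step2]
        exact ENNReal.rpow_le_rpow step4 (by norm_num)
    _ = ENNReal.ofReal (c * Real.sqrt ((2*m + K + 1).factorial)) := by
        rw [ENNReal.ofReal_rpow_of_nonneg (by positivity) (by norm_num)]
        congr 1
        rw [← Real.sqrt_eq_rpow]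
        rw [Real.sqrt_mul (by positivity), Real.sqrt_sq hc]
noncomputable def Tpoly (a b : ℝ) (N : ℕ) : Polynomial ℝ :=
  ∑ n ∈ Finset.range N,
    Polynomial.C ((-1)^n / n.factorial : ℝ) * (Polynomial.C a * Polynomial.X + Polynomial.C b)^n

lemma Tpoly_eval (a b : ℝ) (N : ℕ) (x : ℝ) :
    (Tpoly a b N).eval x = ∑ n ∈ Finset.range N, (-(a*x+b))^n / n.factorial := by
  rw [Tpoly, Polynomial.eval_finset_sum]
  apply Finset.sum_congr rfl
  intro n _
  rw [Polynomial.eval_mul, Polynomial.eval_C, Polynomial.eval_pow]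
  simp only [Polynomial.eval_add, Polynomial.eval_mul, Polynomial.eval_C, Polynomial.eval_X]
  rw [show -(a * x + b) = (-1) * (a * x + b) from by ring, mul_pow]
  ring

lemma Tpoly_root (a b : ℝ) (N : ℕ) (hN : 1 ≤ N) {y : ℝ} (hy : a * y + b = 0) :
    (Tpoly a b N).eval y = 1 := by
  rw [Tpoly_eval, hy]
  rw [Finset.sum_eq_single 0]
  · simp
  · intro n _ hn
    simp [zero_pow hn]
  · intro h
    exact absurd (Finset.mem_range.mpr hN) h

lemma poly_bound (q : Polynomial ℝ) : ∃ c : ℝ, 0 ≤ c ∧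
    ∀ x ∈ Set.Ioi (0:ℝ), |q.eval x| ≤ c * (1+x)^(q.natDegree) := by
  set d := q.natDegree
  refine ⟨∑ i ∈ Finset.range (d+1), |q.coeff i|, Finset.sum_nonneg fun i _ => abs_nonneg _, ?_⟩
  intro x hx
  have hx0 : (0:ℝ) < x := hx
  rw [Polynomial.eval_eq_sum_range]
  calc |∑ i ∈ Finset.range (d+1), q.coeff i * x^i|
      ≤ ∑ i ∈ Finset.range (d+1), |q.coeff i * x^i| := Finset.abs_sum_le_sum_abs _ _
    _ ≤ ∑ i ∈ Finset.range (d+1), |q.coeff i| * (1+x)^d := by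
        apply Finset.sum_le_sum
        intro i hi
        rw [abs_mul]
        apply mul_le_mul_of_nonneg_left _ (abs_nonneg _)
        rw [abs_pow, abs_of_pos hx0]
        calc x^i ≤ (1+x)^i := pow_le_pow_left₀ hx0.le (by linarith) i
          _ ≤ (1+x)^d := pow_le_pow_right₀ (by linarith) (Nat.lt_succ_iff.mp (Finset.mem_range.mp hi))
    _ = (∑ i ∈ Finset.range (d+1), |q.coeff i|) * (1+x)^d := by rw [Finset.sum_mul]

lemma tay (k : ℝ) (hk : 0 < k) (a b : ℝ) (ha : 0 ≤ a) (ha' : a ≤ 1/4) (hb : 0 ≤ b)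
    (hb' : b ≤ 1/4) (q : Polynomial ℝ) {ε : ℝ≥0∞} (hε : 0 < ε) :
    ∃ N : ℕ, 1 ≤ N ∧
      eLpNorm (fun x => q.eval x * Real.exp (-(a*x+b)) - (q * Tpoly a b N).eval x) 2 (mymu k)
        < ε := by
  obtain ⟨c, hc, hcb⟩ := poly_bound q
  set d := q.natDegree
  set K := ⌈k⌉₊
  set c0 := 2*d + K + 1 with hc0
  have key : ∀ N : ℕ, eLpNorm
      (fun x => q.eval x * Real.exp (-(a*x+b)) - (q * Tpoly a b N).eval x) 2 (mymu k)
      ≤ ENNReal.ofReal ((c / (4^N * N.factorial)) *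
          Real.sqrt ((2*(d+N) + K + 1).factorial)) := by
    intro N
    apply master_bound k hk (by positivity) (d + N)
    intro x hx
    have hx0 : (0:ℝ) < x := hx
    have hu0 : 0 ≤ a*x + b := by positivity
    have heq : q.eval x * Real.exp (-(a*x+b)) - (q * Tpoly a b N).eval x
        = q.eval x * (Real.exp (-(a*x+b)) - ∑ n ∈ Finset.range N, (-(a*x+b))^n / n.factorial) := by
      rw [Polynomial.eval_mul, Tpoly_eval]
      ring
    rw [heq, abs_mul]
    have hrem := exp_taylor_remainder N (a*x+b) hu0
    have hub : (a*x+b)^N ≤ (1+x)^N / 4^N := by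
      have h1 : a*x + b ≤ (1+x)/4 := by nlinarith
      calc (a*x+b)^N ≤ ((1+x)/4)^N := pow_le_pow_left₀ hu0 h1 N
        _ = (1+x)^N / 4^N := div_pow _ _ _
    calc |q.eval x| * |Real.exp (-(a*x+b)) - ∑ n ∈ Finset.range N, (-(a*x+b))^n / n.factorial|
        ≤ (c * (1+x)^d) * ((a*x+b)^N / N.factorial) :=
          mul_le_mul (hcb x hx) hrem (abs_nonneg _) (by positivity)
      _ ≤ (c * (1+x)^d) * (((1+x)^N / 4^N) / N.factorial) := by
          apply mul_le_mul_of_nonneg_left _ (by positivity)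
          gcongr
      _ = c / (4^N * N.factorial) * (1+x)^(d+N) := by
          rw [pow_add]
          field_simp
  have hB : Tendsto (fun N : ℕ => c * (Real.sqrt ((2*N + c0).factorial) / (4^N * N.factorial)))
      atTop (nhds 0) := by
    simpa using (fact_ratio_tendsto c0).const_mul c
  have hof : Tendsto (fun N : ℕ => ENNReal.ofReal
      (c * (Real.sqrt ((2*N + c0).factorial) / (4^N * N.factorial)))) atTop (nhds 0) := by
    rw [show (0:ℝ≥0∞) = ENNReal.ofReal 0 by simp]
    exact ENNReal.tendsto_ofReal hB
  have hevent : ∀ᶠ N in atTop, ENNReal.ofReal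
      (c * (Real.sqrt ((2*N + c0).factorial) / (4^N * N.factorial))) < ε :=
    hof.eventually_lt_const hε
  obtain ⟨N, hNe, hN1⟩ := (hevent.and (eventually_ge_atTop 1)).exists
  refine ⟨N, hN1, lt_of_le_of_lt (key N) ?_⟩
  have : (c / (4^N * N.factorial)) * Real.sqrt ((2*(d+N) + K + 1).factorial)
      = c * (Real.sqrt ((2*N + c0).factorial) / (4^N * N.factorial)) := by
    rw [show 2*(d+N) + K + 1 = 2*N + c0 from by omega]
    ring
  rw [this]
  exact hNe
def APX (k : ℝ) (f : ℝ → ℝ) : Prop :=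
  ∀ ε : ℝ≥0∞, 0 < ε → ∃ p : Polynomial ℝ, p.eval (-k) = 0 ∧
    eLpNorm (fun x => f x - p.eval x) 2 (mymu k) < ε

lemma elp_tri (k : ℝ) {f g h : ℝ → ℝ} (hfg : AEStronglyMeasurable (fun x => f x - g x) (mymu k))
    (hgh : AEStronglyMeasurable (fun x => g x - h x) (mymu k)) :
    eLpNorm (fun x => f x - h x) 2 (mymu k) ≤
      eLpNorm (fun x => f x - g x) 2 (mymu k) + eLpNorm (fun x => g x - h x) 2 (mymu k) := by
  have : (fun x => f x - h x) = (fun x => f x - g x) + (fun x => g x - h x) := by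
    funext x
    simp only [Pi.add_apply]
    ring
  rw [this]
  exact eLpNorm_add_le hfg hgh one_le_two

lemma phi_lemma (k : ℝ) (hk : 0 < k) :
    ∀ m : ℕ, APX k (fun x => 1 - (Real.exp (-((1/(4*(1+k)))*x + (1/(4*(1+k)))*k)))^m) := by
  set t := 1/(4*(1+k)) with htdef
  have ht0 : 0 < t := by rw [htdef]; positivity
  have ht4 : t ≤ 1/4 := by
    rw [htdef, div_le_div_iff₀ (by positivity) (by norm_num)]
    nlinarith
  have htk0 : 0 ≤ t*k := by positivity
  have htk4 : t*k ≤ 1/4 := by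
    rw [htdef]
    rw [div_mul_eq_mul_div, div_le_div_iff₀ (by positivity) (by norm_num)]
    nlinarith
  have hroot : t * (-k) + t*k = 0 := by ring
  have hEcont : Continuous (fun x : ℝ => Real.exp (-(t*x + t*k))) :=
    Real.continuous_exp.comp (by fun_prop)
  have hEle1 : ∀ x ∈ Set.Ioi (0:ℝ), Real.exp (-(t*x + t*k)) ≤ 1 := by
    intro x hx
    have hx0 : (0:ℝ) < x := hx
    rw [Real.exp_le_one_iff]
    nlinarith
  have hE0 : ∀ x : ℝ, 0 < Real.exp (-(t*x + t*k)) := fun x => Real.exp_pos _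
  intro m
  induction m with
  | zero =>
    intro ε hε
    refine ⟨0, by simp, ?_⟩
    have : (fun x : ℝ => (1 - (Real.exp (-(t*x + t*k)))^0) - Polynomial.eval x 0) = 0 := by
      funext x; simp
    rw [this, eLpNorm_zero]
    exact hε
  | succ m ih =>
    intro ε hε
    have hε3 : (0:ℝ≥0∞) < ε/3 := ENNReal.div_pos hε.ne' (by norm_num)
    obtain ⟨N₁, hN₁, hT₁⟩ := tay k hk t (t*k) ht0.le ht4 htk0 htk4 1 hε3
    set T₁ := Tpoly t (t*k) N₁ with hT₁def
    obtain ⟨p₁, hp₁root, hp₁⟩ := ih (ε/3) hε3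
    obtain ⟨N₂, hN₂, hT₂⟩ := tay k hk t (t*k) ht0.le ht4 htk0 htk4 p₁ hε3
    set T₂ := Tpoly t (t*k) N₂ with hT₂def
    refine ⟨(1 - T₁) + p₁ * T₂, ?_, ?_⟩
    · rw [Polynomial.eval_add, Polynomial.eval_sub, Polynomial.eval_mul, Polynomial.eval_one,
        hp₁root, Tpoly_root t (t*k) N₁ hN₁ hroot]
      ring
    · have hdecomp : (fun x => (1 - (Real.exp (-(t*x + t*k)))^(m+1))
          - Polynomial.eval x ((1 - T₁) + p₁ * T₂))
          = fun x => ((T₁.eval x - Real.exp (-(t*x + t*k)))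
            + (Real.exp (-(t*x + t*k)) * ((1 - (Real.exp (-(t*x + t*k)))^m) - p₁.eval x)))
            + (p₁.eval x * Real.exp (-(t*x + t*k)) - (p₁ * T₂).eval x) := by
        funext x
        simp only [Polynomial.eval_add, Polynomial.eval_sub, Polynomial.eval_mul,
          Polynomial.eval_one]
        ring
      rw [hdecomp]
      have hc1 : Continuous (fun x => T₁.eval x - Real.exp (-(t*x + t*k))) :=
        (T₁.continuous).sub hEcont
      have hc2 : Continuous (fun x => Real.exp (-(t*x + t*k))
          * ((1 - (Real.exp (-(t*x + t*k)))^m) - p₁.eval x)) :=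
        hEcont.mul ((continuous_const.sub (hEcont.pow m)).sub p₁.continuous)
      have hc3 : Continuous (fun x => p₁.eval x * Real.exp (-(t*x + t*k)) - (p₁ * T₂).eval x) :=
        (p₁.continuous.mul hEcont).sub (p₁ * T₂).continuous
      have e1 : eLpNorm (fun x => T₁.eval x - Real.exp (-(t*x + t*k))) 2 (mymu k) < ε/3 := by
        have : (fun x => T₁.eval x - Real.exp (-(t*x + t*k)))
            = -(fun x => ((1:Polynomial ℝ).eval x) * Real.exp (-(t*x + t*k))
              - ((1 * T₁).eval x)) := by
          funext x
          simp only [Pi.neg_apply, Polynomial.eval_one, Polynomial.eval_mul, one_mul]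
          ring
        rw [this, eLpNorm_neg]
        exact hT₁
      have e2 : eLpNorm (fun x => Real.exp (-(t*x + t*k))
          * ((1 - (Real.exp (-(t*x + t*k)))^m) - p₁.eval x)) 2 (mymu k) < ε/3 := by
        refine lt_of_le_of_lt (eLpNorm_mono_ae ?_) hp₁
        filter_upwards [mymu_ae k] with x hx
        rw [Real.norm_eq_abs, Real.norm_eq_abs, abs_mul,
          abs_of_pos (hE0 x)]
        calc Real.exp (-(t*x + t*k)) * |(1 - (Real.exp (-(t*x + t*k)))^m) - p₁.eval x|
            ≤ 1 * |(1 - (Real.exp (-(t*x + t*k)))^m) - p₁.eval x| :=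
              mul_le_mul_of_nonneg_right (hEle1 x hx) (abs_nonneg _)
          _ = _ := by rw [one_mul]
      have e3 : eLpNorm (fun x => p₁.eval x * Real.exp (-(t*x + t*k))
          - (p₁ * T₂).eval x) 2 (mymu k) < ε/3 := hT₂
      calc eLpNorm _ 2 (mymu k)
          ≤ eLpNorm (fun x => (T₁.eval x - Real.exp (-(t*x + t*k)))
              + (Real.exp (-(t*x + t*k)) * ((1 - (Real.exp (-(t*x + t*k)))^m) - p₁.eval x)))
              2 (mymu k)
            + eLpNorm (fun x => p₁.eval x * Real.exp (-(t*x + t*k)) - (p₁ * T₂).eval x)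
              2 (mymu k) :=
            eLpNorm_add_le (hc1.add hc2).aestronglyMeasurable hc3.aestronglyMeasurable one_le_two
        _ ≤ (eLpNorm (fun x => T₁.eval x - Real.exp (-(t*x + t*k))) 2 (mymu k)
            + eLpNorm (fun x => Real.exp (-(t*x + t*k))
                * ((1 - (Real.exp (-(t*x + t*k)))^m) - p₁.eval x)) 2 (mymu k))
            + eLpNorm (fun x => p₁.eval x * Real.exp (-(t*x + t*k)) - (p₁ * T₂).eval x)
              2 (mymu k) := by
            apply add_le_add_left
            exact eLpNorm_add_le hc1.aestronglyMeasurable hc2.aestronglyMeasurable one_le_two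
        _ < ε/3 + ε/3 + ε/3 := by
            exact ENNReal.add_lt_add (ENNReal.add_lt_add e1 e2) e3
        _ = ε := ENNReal.add_thirds ε
lemma apx_one (k : ℝ) (hk : 0 < k) : APX k (fun _ => (1:ℝ)) := by
  set t := 1/(4*(1+k)) with htdef
  have ht0 : 0 < t := by rw [htdef]; positivity
  have htk0 : 0 < t*k := by positivity
  have hgeo : Tendsto (fun m : ℕ => ENNReal.ofReal ((Real.exp (-(t*k)))^m
      * Real.sqrt ((2*0 + ⌈k⌉₊ + 1).factorial))) atTop (nhds 0) := by
    have h1 : Tendsto (fun m : ℕ => (Real.exp (-(t*k)))^m) atTop (nhds 0) := by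
      apply tendsto_pow_atTop_nhds_zero_of_lt_one (Real.exp_nonneg _)
      rw [Real.exp_lt_one_iff]
      linarith
    have := h1.mul_const (Real.sqrt ((2*0 + ⌈k⌉₊ + 1).factorial))
    rw [zero_mul] at this
    rw [show (0:ℝ≥0∞) = ENNReal.ofReal 0 by simp]
    exact ENNReal.tendsto_ofReal this
  intro ε hε
  have hε2 : (0:ℝ≥0∞) < ε/2 := ENNReal.div_pos hε.ne' (by norm_num)
  obtain ⟨m, hm⟩ := (hgeo.eventually_lt_const hε2).exists
  obtain ⟨p, hproot, hp⟩ := phi_lemma k hk m (ε/2) hε2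
  refine ⟨p, hproot, ?_⟩
  have hbound : eLpNorm (fun x => (1:ℝ) - (1 - (Real.exp (-(t*x + t*k)))^m)) 2 (mymu k)
      ≤ ENNReal.ofReal ((Real.exp (-(t*k)))^m * Real.sqrt ((2*0 + ⌈k⌉₊ + 1).factorial)) := by
    apply master_bound k hk (by positivity) 0
    intro x hx
    have hx0 : (0:ℝ) < x := hx
    have : (1:ℝ) - (1 - (Real.exp (-(t*x + t*k)))^m) = (Real.exp (-(t*x + t*k)))^m := by ring
    rw [this, pow_zero, mul_one, abs_of_pos (pow_pos (Real.exp_pos _) m)]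
    apply pow_le_pow_left₀ (Real.exp_nonneg _)
    apply Real.exp_le_exp.mpr
    nlinarith
  have tri := elp_tri k (f := fun _ => (1:ℝ))
    (g := fun x => 1 - (Real.exp (-(t*x + t*k)))^m) (h := fun x => p.eval x)
    (by apply Continuous.aestronglyMeasurable; fun_prop)
    (by apply Continuous.aestronglyMeasurable
        exact ((continuous_const.sub ((Real.continuous_exp.comp (by fun_prop)).pow m)).sub
          p.continuous))
  calc eLpNorm (fun x => (1:ℝ) - p.eval x) 2 (mymu k) ≤ _ + _ := tri
    _ < ε/2 + ε/2 := ENNReal.add_lt_add (lt_of_le_of_lt hbound hm) hp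
    _ = ε := ENNReal.add_halves ε

lemma apx_const (k : ℝ) (hk : 0 < k) (c : ℝ) : APX k (fun _ => c) := by
  rcases eq_or_ne c 0 with rfl | hc
  · intro ε hε
    refine ⟨0, by simp, ?_⟩
    have : (fun x : ℝ => (0:ℝ) - Polynomial.eval x 0) = 0 := by funext x; simp
    rw [this, eLpNorm_zero]
    exact hε
  · intro ε hε
    set A : ℝ≥0∞ := (‖c‖₊ : ℝ≥0∞) with hA
    have hA0 : A ≠ 0 := by simpa [hA] using hc
    have hAtop : A ≠ ⊤ := ENNReal.coe_ne_top
    have hε' : (0:ℝ≥0∞) < ε / (A + 1) :=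
      ENNReal.div_pos hε.ne' (by simp [hAtop, ENNReal.add_eq_top])
    obtain ⟨p, hproot, hp⟩ := apx_one k hk (ε / (A+1)) hε'
    refine ⟨Polynomial.C c * p, by simp [hproot], ?_⟩
    have hsmul : (fun x => c - (Polynomial.C c * p).eval x)
        = c • (fun x => (1:ℝ) - p.eval x) := by
      funext x
      simp only [Polynomial.eval_mul, Polynomial.eval_C, Pi.smul_apply, smul_eq_mul]
      ring
    rw [hsmul, eLpNorm_const_smul]
    calc (‖c‖₊ : ℝ≥0∞) * eLpNorm (fun x => (1:ℝ) - p.eval x) 2 (mymu k)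
        < A * (ε / (A+1)) := by
          rw [hA]
          exact ENNReal.mul_lt_mul_right hA0 hAtop hp
      _ ≤ (A+1) * (ε / (A+1)) := by
          apply mul_le_mul_left
          exact le_self_add
      _ = ε := ENNReal.mul_div_cancel' (by simp [hA0, ENNReal.add_eq_top]) (by simp [hAtop, ENNReal.add_eq_top])

lemma apx_poly (k : ℝ) (hk : 0 < k) (p : Polynomial ℝ) : APX k (fun x => p.eval x) := by
  intro ε hε
  set c := p.eval (-k) with hc
  obtain ⟨r, hrroot, hr⟩ := apx_const k hk c ε hε
  refine ⟨(p - Polynomial.C c) + r, ?_, ?_⟩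
  · simp [hrroot, hc]
  · have : (fun x => p.eval x - ((p - Polynomial.C c) + r).eval x)
        = (fun x => c - r.eval x) := by
      funext x
      simp only [Polynomial.eval_add, Polynomial.eval_sub, Polynomial.eval_C]
      ring
    rw [this]
    exact hr
lemma apx_poly_exp (k : ℝ) (hk : 0 < k) :
    ∀ (m : ℕ) (q : Polynomial ℝ),
      APX k (fun x => q.eval x * (Real.exp (-((1/4)*x + 0)))^m) := by
  intro m
  induction m with
  | zero =>
    intro q
    have : (fun x => q.eval x * (Real.exp (-((1/4)*x + 0)))^0) = fun x => q.eval x := by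
      funext x; simp
    rw [this]
    exact apx_poly k hk q
  | succ m ih =>
    intro q ε hε
    have hε2 : (0:ℝ≥0∞) < ε/2 := ENNReal.div_pos hε.ne' (by norm_num)
    obtain ⟨N, hN1, hN⟩ := tay k hk (1/4) 0 (by norm_num) (by norm_num) le_rfl (by norm_num) q hε2
    set P := q * Tpoly (1/4) 0 N with hP
    obtain ⟨p, hproot, hp⟩ := ih P (ε/2) hε2
    refine ⟨p, hproot, ?_⟩
    have hEcont : Continuous (fun x : ℝ => Real.exp (-((1/4)*x + 0))) :=
      Real.continuous_exp.comp (by fun_prop)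
    have tri := elp_tri k (f := fun x => q.eval x * (Real.exp (-((1/4)*x + 0)))^(m+1))
      (g := fun x => P.eval x * (Real.exp (-((1/4)*x + 0)))^m) (h := fun x => p.eval x)
      (by apply Continuous.aestronglyMeasurable
          exact ((q.continuous.mul (hEcont.pow (m+1))).sub (P.continuous.mul (hEcont.pow m))))
      (by apply Continuous.aestronglyMeasurable
          exact ((P.continuous.mul (hEcont.pow m)).sub p.continuous))
    refine lt_of_le_of_lt tri ?_
    have e1 : eLpNorm (fun x => q.eval x * (Real.exp (-((1/4)*x + 0)))^(m+1)
        - P.eval x * (Real.exp (-((1/4)*x + 0)))^m) 2 (mymu k) < ε/2 := by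
      refine lt_of_le_of_lt (eLpNorm_mono_ae ?_) hN
      filter_upwards [mymu_ae k] with x hx
      have hx0 : (0:ℝ) < x := hx
      have hfact : q.eval x * (Real.exp (-((1/4)*x + 0)))^(m+1)
          - P.eval x * (Real.exp (-((1/4)*x + 0)))^m
          = (q.eval x * Real.exp (-((1/4)*x + 0)) - P.eval x)
            * (Real.exp (-((1/4)*x + 0)))^m := by ring
      rw [Real.norm_eq_abs, Real.norm_eq_abs, hfact, abs_mul]
      have hle1 : (Real.exp (-((1/4)*x + 0)))^m ≤ 1 := by
        apply pow_le_one₀ (Real.exp_nonneg _)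
        rw [Real.exp_le_one_iff]
        nlinarith
      calc |q.eval x * Real.exp (-((1/4)*x + 0)) - P.eval x| * |(Real.exp (-((1/4)*x + 0)))^m|
          ≤ |q.eval x * Real.exp (-((1/4)*x + 0)) - P.eval x| * 1 := by
            apply mul_le_mul_of_nonneg_left _ (abs_nonneg _)
            rw [abs_of_pos (pow_pos (Real.exp_pos _) m)]
            exact hle1
        _ = |q.eval x * Real.exp (-((1/4)*x + 0)) - P.eval x| := mul_one _
    calc eLpNorm _ 2 (mymu k) + eLpNorm _ 2 (mymu k) < ε/2 + ε/2 :=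
          ENNReal.add_lt_add e1 hp
      _ = ε := ENNReal.add_halves ε

lemma apx_sum (k : ℝ) (hk : 0 < k) {ι : Type*} (s : Finset ι) (F : ι → ℝ → ℝ)
    (hcont : ∀ i, Continuous (F i)) (h : ∀ i ∈ s, APX k (F i)) :
    APX k (fun x => ∑ i ∈ s, F i x) := by
  induction s using Finset.cons_induction with
  | empty =>
    intro ε hε
    refine ⟨0, by simp, ?_⟩
    have : (fun x : ℝ => (∑ i ∈ (∅ : Finset ι), F i x) - Polynomial.eval x 0) = 0 := by
      funext x; simp
    rw [this, eLpNorm_zero]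
    exact hε
  | cons a s ha ih =>
    intro ε hε
    have hε2 : (0:ℝ≥0∞) < ε/2 := ENNReal.div_pos hε.ne' (by norm_num)
    obtain ⟨pa, haroot, hpa⟩ := h a (Finset.mem_cons_self a s) (ε/2) hε2
    obtain ⟨pr, hrroot, hpr⟩ := ih (fun i hi => h i (Finset.mem_cons_of_mem hi)) (ε/2) hε2
    refine ⟨pa + pr, by simp [haroot, hrroot], ?_⟩
    have hdecomp : (fun x => (∑ i ∈ Finset.cons a s ha, F i x) - (pa + pr).eval x)
        = (fun x => (F a x - pa.eval x) + ((∑ i ∈ s, F i x) - pr.eval x)) := by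
      funext x
      rw [Finset.sum_cons, Polynomial.eval_add]
      ring
    rw [hdecomp]
    have hcs : Continuous (fun x => ∑ i ∈ s, F i x) :=
      continuous_finset_sum _ fun i _ => hcont i
    calc eLpNorm _ 2 (mymu k)
        ≤ eLpNorm (fun x => F a x - pa.eval x) 2 (mymu k)
          + eLpNorm (fun x => (∑ i ∈ s, F i x) - pr.eval x) 2 (mymu k) :=
          eLpNorm_add_le ((hcont a).sub pa.continuous).aestronglyMeasurable
            (hcs.sub pr.continuous).aestronglyMeasurable one_le_two
      _ < ε/2 + ε/2 := ENNReal.add_lt_add hpa hpr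
      _ = ε := ENNReal.add_halves ε

lemma apx_exp_poly (k : ℝ) (hk : 0 < k) (r : Polynomial ℝ) :
    APX k (fun x => r.eval (Real.exp (-x))) := by
  have hrepr : (fun x => r.eval (Real.exp (-x)))
      = (fun x => ∑ i ∈ Finset.range (r.natDegree + 1),
          (Polynomial.C (r.coeff i)).eval x * (Real.exp (-((1/4)*x + 0)))^(4*i)) := by
    funext x
    rw [Polynomial.eval_eq_sum_range]
    apply Finset.sum_congr rfl
    intro i _
    rw [Polynomial.eval_C]
    congr 1
    rw [← Real.exp_nat_mul, ← Real.exp_nat_mul]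
    congr 1
    push_cast
    ring
  rw [hrepr]
  apply apx_sum k hk
  · intro i
    exact (Polynomial.C (r.coeff i)).continuous.mul
      ((Real.continuous_exp.comp (((continuous_const.mul continuous_id).add
        continuous_const).neg)).pow _)
  · intro i _
    exact apx_poly_exp k hk (4*i) (Polynomial.C (r.coeff i))
lemma apx_compsupp (k : ℝ) (hk : 0 < k) (f : ℝ → ℝ) (hf : Continuous f)
    (hsupp : HasCompactSupport f) : APX k f := by
  obtain ⟨R0, hR0⟩ := (Metric.isBounded_iff_subset_closedBall 0).mp hsupp.isBounded
  set R := max R0 0 with hR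
  have hRsupp : tsupport f ⊆ Metric.closedBall 0 R :=
    hR0.trans (Metric.closedBall_subset_closedBall (le_max_left _ _))
  have hfzero : ∀ x : ℝ, R < |x| → f x = 0 := by
    intro x hx
    apply image_eq_zero_of_notMem_tsupport
    intro hmem
    have := hRsupp hmem
    rw [Metric.mem_closedBall, Real.dist_eq, sub_zero] at this
    linarith
  set g : ℝ → ℝ := fun u => if u ≤ 0 then 0 else f (-Real.log u) with hg
  have hgval : ∀ x : ℝ, 0 < x → g (Real.exp (-x)) = f x := by
    intro x hx
    rw [hg]
    simp only
    rw [if_neg (not_le.mpr (Real.exp_pos _)), Real.log_exp, neg_neg]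
  have hgcont : ContinuousOn g (Set.Icc 0 1) := by
    intro u hu
    rcases eq_or_lt_of_le hu.1 with hu0 | hu0
    · -- u = 0
      have hg0 : g u = 0 := by rw [hg, ← hu0]; simp
      set δ := Real.exp (-(R+1)) with hδ
      have hδ0 : 0 < δ := Real.exp_pos _
      have hev : g =ᶠ[nhdsWithin u (Set.Icc 0 1)] (fun _ => 0) := by
        apply Filter.mem_of_superset (nhdsWithin_le_nhds (eventually_abs_sub_lt u hδ0))
        intro v hv
        simp only [Set.mem_setOf_eq] at hv ⊢
        rcases le_or_gt v 0 with hv0 | hv0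
        · rw [hg]; simp [hv0]
        · rw [hg]
          simp only [if_neg (not_le.mpr hv0)]
          apply hfzero
          rw [← hu0, sub_zero] at hv
          have hvδ : v < δ := lt_of_le_of_lt (le_abs_self v) hv
          have hlog : Real.log v < -(R+1) := by
            calc Real.log v < Real.log δ := Real.log_lt_log hv0 hvδ
              _ = -(R+1) := by rw [hδ, Real.log_exp]
          have : R < -Real.log v := by linarith
          calc R < -Real.log v := this
            _ ≤ |(-Real.log v)| := le_abs_self _
      have : ContinuousWithinAt g (Set.Icc 0 1) u := by
        apply ContinuousWithinAt.congr_of_eventuallyEq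
          (continuousWithinAt_const (b := (0:ℝ))) hev hg0
      exact this
    · -- 0 < u
      apply ContinuousAt.continuousWithinAt
      have hca : ContinuousAt (fun v => f (-Real.log v)) u :=
        hf.continuousAt.comp ((Real.continuousAt_log (ne_of_gt hu0)).neg)
      apply hca.congr
      filter_upwards [eventually_gt_nhds hu0] with v hv
      rw [hg]
      simp only [if_neg (not_le.mpr hv)]
  intro ε hε
  have hε2 : (0:ℝ≥0∞) < ε/2 := ENNReal.div_pos hε.ne' (by norm_num)
  set S := Real.sqrt ((2*0 + ⌈k⌉₊ + 1).factorial) with hS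
  have hS0 : 0 ≤ S := Real.sqrt_nonneg _
  have htend : Tendsto (fun n : ℕ => ENNReal.ofReal ((1/(n+1)) * S)) atTop (nhds 0) := by
    rw [show (0:ℝ≥0∞) = ENNReal.ofReal 0 by simp]
    apply ENNReal.tendsto_ofReal
    have := tendsto_one_div_add_atTop_nhds_zero_nat.mul_const S
    rw [zero_mul] at this
    exact this
  obtain ⟨n, hn⟩ := (htend.eventually_lt_const hε2).exists
  have hδ0 : (0:ℝ) < 1/(n+1) := by positivity
  obtain ⟨r, hrnear⟩ := exists_polynomial_near_of_continuousOn 0 1 g hgcont (1/(n+1)) hδ0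
  have happrox : eLpNorm (fun x => f x - r.eval (Real.exp (-x))) 2 (mymu k)
      ≤ ENNReal.ofReal ((1/(n+1)) * S) := by
    apply master_bound k hk hδ0.le 0
    intro x hx
    have hx0 : (0:ℝ) < x := hx
    have hmem : Real.exp (-x) ∈ Set.Icc (0:ℝ) 1 := by
      constructor
      · exact (Real.exp_pos _).le
      · rw [Real.exp_le_one_iff]; linarith
    have := hrnear (Real.exp (-x)) hmem
    rw [hgval x hx0] at this
    rw [pow_zero, mul_one, abs_sub_comm]
    exact this.le
  obtain ⟨p, hproot, hp⟩ := apx_exp_poly k hk r (ε/2) hε2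
  refine ⟨p, hproot, ?_⟩
  have hrc : Continuous (fun x : ℝ => r.eval (Real.exp (-x))) :=
    r.continuous.comp (Real.continuous_exp.comp continuous_neg)
  have tri := elp_tri k (f := f) (g := fun x => r.eval (Real.exp (-x)))
    (h := fun x => p.eval x)
    ((hf.sub hrc).aestronglyMeasurable)
    ((hrc.sub p.continuous).aestronglyMeasurable)
  refine lt_of_le_of_lt tri ?_
  calc eLpNorm _ 2 (mymu k) + eLpNorm _ 2 (mymu k)
      < ε/2 + ε/2 := ENNReal.add_lt_add (lt_of_le_of_lt happrox hn) hp
    _ = ε := ENNReal.add_halves ε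
lemma mymu_finite (k : ℝ) (hk : 0 < k) : IsFiniteMeasure (mymu k) := by
  constructor
  rw [mymu, withDensity_apply _ MeasurableSet.univ, Measure.restrict_univ]
  have hle : ∫⁻ x in Set.Ioi (0:ℝ), ENNReal.ofReal (x ^ k * Real.exp (-x)) ∂volume
      ≤ ∫⁻ x in Set.Ioi (0:ℝ), ENNReal.ofReal ((1+x)^(⌈k⌉₊:ℕ) * Real.exp (-x)) ∂volume := by
    apply setLIntegral_mono' measurableSet_Ioi
    intro x hx
    have hx0 : (0:ℝ) < x := hx
    apply ENNReal.ofReal_le_ofReal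
    exact mul_le_mul_of_nonneg_right (xk_le k hk hx0) (Real.exp_nonneg _)
  have heq : ∫⁻ x in Set.Ioi (0:ℝ), ENNReal.ofReal ((1+x)^(⌈k⌉₊:ℕ) * Real.exp (-x)) ∂volume
      = ENNReal.ofReal (∫ x in Set.Ioi (0:ℝ), (1+x)^(⌈k⌉₊:ℕ) * Real.exp (-x)) := by
    rw [← ofReal_integral_eq_lintegral_ofReal (one_add_int _).1]
    filter_upwards [ae_restrict_mem measurableSet_Ioi] with x hx
    have : (0:ℝ) < x := hx
    positivity
  calc ∫⁻ x in Set.Ioi (0:ℝ), ENNReal.ofReal (x ^ k * Real.exp (-x)) ∂volume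
      ≤ _ := hle
    _ = _ := heq
    _ < ⊤ := ENNReal.ofReal_lt_top

lemma mem_poly (k : ℝ) (hk : 0 < k) (p : Polynomial ℝ) :
    MemLp (fun x => p.eval x) 2 (mymu k) := by
  obtain ⟨c, hc, hcb⟩ := poly_bound p
  exact ⟨p.continuous.aestronglyMeasurable,
    lt_of_le_of_lt (master_bound k hk hc p.natDegree hcb) ENNReal.ofReal_lt_top⟩


/-- For k > 0, the space of real polynomials p with p(-k) = 0 is
dense in L²([0,∞), x^k e^{-x} dx). -/
theorem stmt_2 (k : ℝ) (hk : 0 < k) :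
    Dense {f : Lp ℝ 2
        ((volume.restrict (Set.Ioi (0 : ℝ))).withDensity
          (fun x => ENNReal.ofReal (x ^ k * Real.exp (-x)))) |
      ∃ p : Polynomial ℝ, p.eval (-k) = 0 ∧
        ∀ᵐ x ∂((volume.restrict (Set.Ioi (0 : ℝ))).withDensity
          (fun x => ENNReal.ofReal (x ^ k * Real.exp (-x)))),
          f x = p.eval x} := by
  haveI : IsFiniteMeasure (mymu k) := mymu_finite k hk
  show Dense {f : Lp ℝ 2 (mymu k) | ∃ p : Polynomial ℝ, p.eval (-k) = 0 ∧
    ∀ᵐ x ∂(mymu k), f x = p.eval x}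
  rw [Metric.dense_iff]
  intro F r hr
  set f : ℝ → ℝ := ⇑F with hf
  have hmem : MemLp f 2 (mymu k) := Lp.memLp F
  set δ : ℝ≥0∞ := ENNReal.ofReal r / 2 with hδ
  have hr0 : ENNReal.ofReal r ≠ 0 := by
    simp [ENNReal.ofReal_eq_zero, not_le, hr]
  have hδ0 : (0:ℝ≥0∞) < δ/2 := by
    apply ENNReal.div_pos _ (by norm_num)
    apply ENNReal.div_ne_zero.mpr
    exact ⟨hr0, by norm_num⟩
  obtain ⟨g, gsupp, hfg, gcont, gmem⟩ :=
    hmem.exists_hasCompactSupport_eLpNorm_sub_le (by norm_num : (2:ℝ≥0∞) ≠ ∞) hδ0.ne'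
  obtain ⟨p, hproot, hp⟩ := apx_compsupp k hk g gcont gsupp (δ/2) hδ0
  have hpmem := mem_poly k hk p
  refine ⟨hpmem.toLp _, ?_, p, hproot, hpmem.coeFn_toLp⟩
  rw [Metric.mem_ball]
  have hcongr : eLpNorm (⇑(hpmem.toLp _) - ⇑F) 2 (mymu k)
      = eLpNorm (fun x => f x - p.eval x) 2 (mymu k) := by
    have h1 : eLpNorm (⇑(hpmem.toLp _) - ⇑F) 2 (mymu k)
        = eLpNorm (fun x => p.eval x - f x) 2 (mymu k) := by
      apply eLpNorm_congr_ae
      filter_upwards [hpmem.coeFn_toLp] with x hx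
      simp only [Pi.sub_apply, hx, hf]
    rw [h1, show (fun x => p.eval x - f x) = -(fun x => f x - p.eval x) from
      funext fun x => by simp [neg_sub], eLpNorm_neg]
  have hfg' : eLpNorm (fun x => f x - g x) 2 (mymu k) ≤ δ/2 := hfg
  have htot : eLpNorm (fun x => f x - p.eval x) 2 (mymu k) < ENNReal.ofReal r := by
    have tri := elp_tri k (f := f) (g := g) (h := fun x => p.eval x)
      (hmem.aestronglyMeasurable.sub gcont.aestronglyMeasurable)
      ((gcont.sub p.continuous).aestronglyMeasurable)
    calc eLpNorm (fun x => f x - p.eval x) 2 (mymu k) ≤ _ + _ := tri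
      _ ≤ δ/2 + δ/2 := add_le_add hfg' hp.le
      _ = δ := ENNReal.add_halves δ
      _ < ENNReal.ofReal r := ENNReal.half_lt_self hr0 ENNReal.ofReal_ne_top
  rw [Lp.dist_def, hcongr]
  have hne : eLpNorm (fun x => f x - p.eval x) 2 (mymu k) ≠ ⊤ := ne_top_of_lt htot
  exact (ENNReal.lt_ofReal_iff_toReal_lt hne).mp htot
end

section
/- For k > 0, the space E^{-1,-k} = span{x+k+1, (x+k)^2, (x+k)^3, ...} = {p polynomial : p'(-k) - p(-k) = 0} is dense in L^2([0,∞), Ŵ_k dx) where Ŵ_k(x) = e^{-x} x^k/(x+k)^2. -/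
open MeasureTheory Polynomial Set Filter
open scoped NNReal ENNReal Nat

noncomputable section

namespace Stmt3

/-- polynomial times decaying exponential tends to zero -/
lemma polyexp_tendsto (p : ℝ[X]) {b : ℝ} (hb : 0 < b) :
    Tendsto (fun x => p.eval x * Real.exp (-(b * x))) atTop (nhds 0) := by
  have h1 := (p.comp (Polynomial.C b⁻¹ * Polynomial.X)).tendsto_div_exp_atTop
  have h2 : Tendsto (fun x : ℝ => b * x) atTop atTop :=
    Tendsto.const_mul_atTop hb tendsto_id
  refine (h1.comp h2).congr fun x => ?_
  simp only [Function.comp_apply, eval_comp, eval_mul, eval_C, eval_X]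
  rw [inv_mul_cancel_left₀ hb.ne', div_eq_mul_inv, ← Real.exp_neg]

lemma exists_bound {v : ℝ → ℝ} (hc : Continuous v) {b : ℝ} (hb : 0 ≤ b)
    (ht : Tendsto (fun x => v x * Real.exp (-(b * x))) atTop (nhds 0)) :
    ∃ C : ℝ, 0 ≤ C ∧ ∀ x : ℝ, 0 ≤ x → |v x| ≤ C * Real.exp (b * x) := by
  have h1 : ∀ᶠ x in atTop, |v x * Real.exp (-(b * x))| < 1 := by
    have := ht.abs
    rw [abs_zero] at this
    exact this.eventually_lt_const one_pos
  obtain ⟨B, hB⟩ := eventually_atTop.1 h1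
  set B' := max B 0 with hB'
  obtain ⟨M, hM⟩ := (isCompact_Icc (a := (0:ℝ)) (b := B')).exists_bound_of_continuousOn
    hc.continuousOn
  refine ⟨max M 1, le_trans zero_le_one (le_max_right _ _), fun x hx => ?_⟩
  by_cases hxB : x ≤ B'
  · calc |v x| ≤ M := hM x ⟨hx, hxB⟩
      _ ≤ max M 1 := le_max_left _ _
      _ ≤ max M 1 * Real.exp (b * x) := by
          nlinarith [Real.one_le_exp (mul_nonneg hb hx), le_trans zero_le_one (le_max_right M 1)]
  · have hxB' : B ≤ x := le_trans (le_max_left B 0) (le_of_not_ge hxB)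
    have h2 := (hB x hxB').le
    rw [abs_mul, abs_of_pos (Real.exp_pos _)] at h2
    have h3 : |v x| ≤ Real.exp (b * x) := by
      have := mul_le_mul_of_nonneg_right h2 (Real.exp_pos (b * x)).le
      rwa [one_mul, mul_assoc, ← Real.exp_add, neg_add_cancel, Real.exp_zero, mul_one] at this
    calc |v x| ≤ Real.exp (b * x) := h3
      _ ≤ max M 1 * Real.exp (b * x) := by
          nlinarith [Real.exp_pos (b * x), le_max_right M 1]

lemma integrableOn_exp_poly {b s : ℝ} (hb : 0 < b) (hs : 0 < s) :
    IntegrableOn (fun x => Real.exp (-(b * x)) * x ^ s) (Ioi (0:ℝ)) := by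
  have h := integrableOn_rpow_mul_exp_neg_mul_rpow (p := 1) (s := s) (b := b)
    (by linarith) zero_lt_one hb
  refine h.congr_fun (fun x hx => ?_) measurableSet_Ioi
  simp only [Real.rpow_one]
  ring_nf


variable (k : ℝ)

def W (x : ℝ) : ℝ := Real.exp (-x) * x ^ k / (x + k) ^ 2

def mu : Measure ℝ :=
  (volume.restrict (Set.Ioi (0 : ℝ))).withDensity (fun x => ENNReal.ofReal (W k x))

lemma W_meas : Measurable (W k) := by
  apply Measurable.div
  · exact ((Real.continuous_exp.comp continuous_neg).measurable).mul
      (measurable_id.pow_const k |>.mono le_rfl le_rfl) |>.mono le_rfl le_rfl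
  · exact ((continuous_id.add continuous_const).pow 2).measurable

variable {k}

lemma W_nonneg (hk : 0 < k) {x : ℝ} (hx : x ∈ Ioi (0:ℝ)) : 0 ≤ W k x := by
  have : (0:ℝ) < x := hx
  exact div_nonneg (mul_nonneg (Real.exp_pos _).le (Real.rpow_nonneg this.le _)) (sq_nonneg _)

lemma mu_eq : mu k
    = (volume.restrict (Set.Ioi (0 : ℝ))).withDensity
        (fun x => ((Real.toNNReal (W k x) : ℝ≥0) : ℝ≥0∞)) := rfl

lemma WNN_meas : Measurable (fun x => Real.toNNReal (W k x)) :=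
  (W_meas k).real_toNNReal

/-- membership in L² of the weighted measure, from sub-`exp(x/3)` growth -/
lemma memL2_of_growth (hk : 0 < k) {v : ℝ → ℝ} (hv : Continuous v)
    (ht : Tendsto (fun x => v x * Real.exp (-(3⁻¹ * x))) atTop (nhds 0)) :
    MemLp v 2 (mu k) := by
  rw [memLp_two_iff_integrable_sq hv.aestronglyMeasurable, mu_eq,
    integrable_withDensity_iff_integrable_smul WNN_meas]
  obtain ⟨C, hC0, hC⟩ := exists_bound hv (by norm_num) ht
  have hdom : IntegrableOn (fun x => (C ^ 2 / k ^ 2) * (Real.exp (-(3⁻¹ * x)) * x ^ k))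
      (Ioi (0:ℝ)) := (integrableOn_exp_poly (by norm_num) hk).const_mul _
  refine Integrable.mono' hdom ?_ ?_
  · exact (((measurable_coe_nnreal_real.comp WNN_meas).mul
      ((hv.measurable).pow_const 2)).aestronglyMeasurable)
  · rw [ae_restrict_iff' measurableSet_Ioi]
    refine Eventually.of_forall fun x hx => ?_
    have hx0 : (0:ℝ) < x := hx
    have hWnn := W_nonneg hk hx
    have h1 : ‖(Real.toNNReal (W k x) : ℝ≥0) • v x ^ 2‖ = W k x * v x ^ 2 := by
      rw [NNReal.smul_def, Real.coe_toNNReal _ hWnn, smul_eq_mul, Real.norm_eq_abs,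
        abs_of_nonneg (by positivity)]
    rw [h1]
    have hW_le : W k x ≤ Real.exp (-x) * x ^ k / k ^ 2 := by
      apply div_le_div_of_nonneg_left (mul_nonneg (Real.exp_pos _).le (Real.rpow_nonneg hx0.le _))
        (by positivity)
      nlinarith
    have hv2x : v x ^ 2 ≤ C ^ 2 * Real.exp (3⁻¹ * x) ^ 2 := by
      have := hC x hx0.le
      nlinarith [abs_nonneg (v x), neg_abs_le (v x), le_abs_self (v x)]
    calc W k x * v x ^ 2 ≤ (Real.exp (-x) * x ^ k / k ^ 2) * (C ^ 2 * Real.exp (3⁻¹ * x) ^ 2) := by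
          apply mul_le_mul hW_le hv2x (sq_nonneg _)
          positivity
      _ = (C ^ 2 / k ^ 2) * ((Real.exp (-x) * Real.exp (3⁻¹ * x) ^ 2) * x ^ k) := by ring
      _ = (C ^ 2 / k ^ 2) * (Real.exp (-(3⁻¹ * x)) * x ^ k) := by
          have he : Real.exp (-x) * Real.exp (3⁻¹ * x) ^ 2 = Real.exp (-(3⁻¹ * x)) := by
            rw [← Real.exp_nat_mul, ← Real.exp_add]
            congr 1
            push_cast
            ring
          rw [he]

lemma integrable_mul_L2 {α : Type*} {m : MeasurableSpace α} {μ : Measure α} {u v : α → ℝ}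
    (hu : MemLp u 2 μ) (hv : MemLp v 2 μ) : Integrable (fun x => u x * v x) μ := by
  have h := L2.integrable_inner (𝕜 := ℝ) (hu.toLp u) (hv.toLp v)
  refine h.congr ?_
  filter_upwards [hu.coeFn_toLp, hv.coeFn_toLp] with x h1 h2
  rw [RCLike.inner_apply, starRingEnd_apply, star_trivial, h1, h2, mul_comm]


/-- The transfer lemma between the weighted measure and Lebesgue measure. -/
lemma transfer (hk : 0 < k) {g : ℝ → ℝ} (hgsm : StronglyMeasurable g)
    (hgL2 : MemLp g 2 (mu k)) {v : ℝ → ℝ} (hv : Continuous v)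
    (ht : Tendsto (fun x => v x * Real.exp (-(4⁻¹ * x))) atTop (nhds 0)) :
    Integrable (fun x =>
        Set.indicator (Ioi 0) (fun y => g y * (Real.exp (-y) * y ^ k)) x * v x) volume ∧
      (∫ x, Set.indicator (Ioi 0) (fun y => g y * (Real.exp (-y) * y ^ k)) x * v x)
        = ∫ x, g x * ((x + k) ^ 2 * v x) ∂(mu k) := by
  -- L² membership of the pairing function
  have hmem2 : MemLp (fun x => (x + k) ^ 2 * v x) 2 (mu k) := by
    refine memL2_of_growth hk (by continuity) ?_
    have h1 := (polyexp_tendsto ((X + C k) ^ 2) (b := 12⁻¹) (by norm_num)).mul ht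
    rw [mul_zero] at h1
    refine h1.congr fun x => ?_
    simp only [eval_pow, eval_add, eval_X, eval_C]
    have he : Real.exp (-(12⁻¹ * x)) * Real.exp (-(4⁻¹ * x)) = Real.exp (-(3⁻¹ * x)) := by
      rw [← Real.exp_add]; congr 1; ring
    linear_combination ((x + k) ^ 2 * v x) * he
  have hFint : Integrable (fun x => g x * ((x + k) ^ 2 * v x)) (mu k) :=
    integrable_mul_L2 hgL2 hmem2
  -- move to the Lebesgue side
  rw [mu_eq] at hFint
  have hFint' := (integrable_withDensity_iff_integrable_smul WNN_meas).1 hFint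
  -- pointwise identification on `Ioi 0`
  have hEq : ∀ x ∈ Ioi (0:ℝ),
      (Real.toNNReal (W k x) : ℝ≥0) • (g x * ((x + k) ^ 2 * v x))
        = g x * (Real.exp (-x) * x ^ k) * v x := by
    intro x hx
    have hx0 : (0:ℝ) < x := hx
    have hxk : x + k ≠ 0 := by positivity
    rw [NNReal.smul_def, Real.coe_toNNReal _ (W_nonneg hk hx), smul_eq_mul, W]
    field_simp
  constructor
  · rw [show (fun x => Set.indicator (Ioi 0) (fun y => g y * (Real.exp (-y) * y ^ k)) x * v x)
        = Set.indicator (Ioi 0) (fun y => g y * (Real.exp (-y) * y ^ k) * v y) from ?_]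
    · rw [integrable_indicator_iff measurableSet_Ioi]
      exact IntegrableOn.congr_fun hFint' (fun x hx => hEq x hx) measurableSet_Ioi
    · funext x
      by_cases hx : x ∈ Ioi (0:ℝ)
      · rw [Set.indicator_of_mem hx, Set.indicator_of_mem hx]
      · rw [Set.indicator_of_notMem hx, Set.indicator_of_notMem hx, zero_mul]
  · have step1 : (∫ x, Set.indicator (Ioi 0)
        (fun y => g y * (Real.exp (-y) * y ^ k)) x * v x)
        = ∫ x in Ioi (0:ℝ), g x * (Real.exp (-x) * x ^ k) * v x := by
      rw [show (fun x => Set.indicator (Ioi 0) (fun y => g y * (Real.exp (-y) * y ^ k)) x * v x)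
          = Set.indicator (Ioi 0) (fun y => g y * (Real.exp (-y) * y ^ k) * v y) from ?_]
      · exact integral_indicator measurableSet_Ioi
      · funext x
        by_cases hx : x ∈ Ioi (0:ℝ)
        · rw [Set.indicator_of_mem hx, Set.indicator_of_mem hx]
        · rw [Set.indicator_of_notMem hx, Set.indicator_of_notMem hx, zero_mul]
    have step2 : (∫ x, g x * ((x + k) ^ 2 * v x) ∂(mu k))
        = ∫ x in Ioi (0:ℝ),
            (Real.toNNReal (W k x) : ℝ≥0) • (g x * ((x + k) ^ 2 * v x)) := by
      rw [mu_eq, integral_withDensity_eq_integral_smul WNN_meas]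
    rw [step1, step2]
    exact setIntegral_congr_fun measurableSet_Ioi fun x hx => (hEq x hx).symm


lemma core {k : ℝ} (hk : 0 < k) {h : ℝ → ℝ} (hmeas : AEStronglyMeasurable h volume)
    (hsupp : ∀ x : ℝ, x ≤ 0 → h x = 0)
    (hint : ∀ m : ℕ, Integrable (fun x => h x * ((x + k) ^ m * Real.exp (8⁻¹ * x))) volume)
    (hmom : ∀ m : ℕ, (∫ x, h x * (x + k) ^ m) = 0) :
    ∀ᵐ x, h x = 0 := by
  have habs : ∀ m : ℕ, Integrable (fun x => |h x * ((x + k) ^ m * Real.exp (8⁻¹ * x))|) volume :=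
    fun m => (hint m).abs
  -- integrability against bounded multipliers
  have I2 : ∀ (b : ℝ → ℝ), AEStronglyMeasurable b volume → ∀ B : ℝ, 0 ≤ B →
      (∀ x : ℝ, 0 < x → |b x| ≤ B) → Integrable (fun x => h x * b x) volume := by
    intro b hb B hB hbB
    refine ((habs 0).const_mul B).mono' (hmeas.mul hb) (Eventually.of_forall fun x => ?_)
    by_cases hx : 0 < x
    · rw [Real.norm_eq_abs, abs_mul]
      have h1 : |h x * ((x + k) ^ 0 * Real.exp (8⁻¹ * x))| = |h x| * Real.exp (8⁻¹ * x) := by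
        rw [abs_mul, pow_zero, one_mul, abs_of_pos (Real.exp_pos _)]
      rw [h1]
      have h2 : (1:ℝ) ≤ Real.exp (8⁻¹ * x) := Real.one_le_exp (by positivity)
      calc |h x| * |b x| ≤ |h x| * B := mul_le_mul_of_nonneg_left (hbB x hx) (abs_nonneg _)
        _ = B * (|h x| * 1) := by ring
        _ ≤ B * (|h x| * Real.exp (8⁻¹ * x)) := by
            apply mul_le_mul_of_nonneg_left _ hB
            exact mul_le_mul_of_nonneg_left h2 (abs_nonneg _)
    · rw [hsupp x (le_of_not_gt hx)]
      simp [mul_nonneg hB (abs_nonneg _)]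
  have hh1 : Integrable h volume := by
    have := I2 (fun _ => 1) aestronglyMeasurable_const 1 zero_le_one (fun x _ => by norm_num)
    refine this.congr (Eventually.of_forall fun x => by simp)
  -- strengthened integrability
  have I1 : ∀ m : ℕ, Integrable (fun x => |h x| * ((x + k) ^ m * Real.exp (8⁻¹ * (x + k)))) volume := by
    intro m
    refine ((habs m).const_mul (Real.exp (8⁻¹ * k))).congr (Eventually.of_forall fun x => ?_)
    show Real.exp (8⁻¹ * k) * |h x * ((x + k) ^ m * Real.exp (8⁻¹ * x))|
        = |h x| * ((x + k) ^ m * Real.exp (8⁻¹ * (x + k)))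
    by_cases hx : 0 < x
    · have hxk : (0:ℝ) ≤ x + k := by linarith
      rw [abs_mul, abs_of_nonneg (mul_nonneg (pow_nonneg hxk m) (Real.exp_pos _).le)]
      have he : Real.exp (8⁻¹ * k) * Real.exp (8⁻¹ * x) = Real.exp (8⁻¹ * (x + k)) := by
        rw [← Real.exp_add]; congr 1; ring
      linear_combination (|h x| * (x + k) ^ m) * he
    · rw [hsupp x (le_of_not_gt hx)]
      simp
  have hExp : ∀ y : ℝ, HasSum (fun j : ℕ => y ^ j / j !) (Real.exp y) := by
    intro y
    have h1 : Real.exp y = ∑' j : ℕ, y ^ j / j ! := by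
      rw [Real.exp_eq_exp_ℝ, NormedSpace.exp_eq_tsum_div]
    rw [h1]
    exact (Real.summable_pow_div_factorial y).hasSum
  -- the key induction
  have KEY : ∀ n m : ℕ, (∫ x, h x * (Real.exp (-(8⁻¹ * (n * (x + k)))) * (x + k) ^ m)) = 0 := by
    intro n
    induction n with
    | zero =>
      intro m
      have h0 : ∀ x : ℝ, h x * (Real.exp (-(8⁻¹ * (((0:ℕ):ℝ) * (x + k)))) * (x + k) ^ m)
          = h x * (x + k) ^ m := by intro x; norm_num
      rw [integral_congr_ae (Eventually.of_forall h0)]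
      exact hmom m
    | succ n ih =>
      intro m
      set c : ℝ → ℝ := fun x => h x * (Real.exp (-(8⁻¹ * (n * (x + k)))) * (x + k) ^ m) with hc
      set F : ℕ → ℝ → ℝ := fun j x => c x * ((-(8⁻¹ * (x + k))) ^ j / j !) with hFdef
      have hsum_pt : ∀ x : ℝ, HasSum (fun j => F j x)
          (h x * (Real.exp (-(8⁻¹ * (((n:ℕ)+1 : ℕ) * (x + k)))) * (x + k) ^ m)) := by
        intro x
        have h1 := (hExp (-(8⁻¹ * (x + k)))).mul_left (c x)
        have h2 : c x * Real.exp (-(8⁻¹ * (x + k)))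
            = h x * (Real.exp (-(8⁻¹ * (((n:ℕ)+1 : ℕ) * (x + k)))) * (x + k) ^ m) := by
          rw [hc]
          have he : Real.exp (-(8⁻¹ * (n * (x + k)))) * Real.exp (-(8⁻¹ * (x + k)))
              = Real.exp (-(8⁻¹ * (((n:ℕ)+1 : ℕ) * (x + k)))) := by
            rw [← Real.exp_add]; congr 1; push_cast; ring
          linear_combination (h x * (x + k) ^ m) * he
        rw [← h2]
        exact h1
      have hmeasF : ∀ j : ℕ, AEStronglyMeasurable (F j) volume := by
        intro j
        exact (hmeas.mul (Continuous.aestronglyMeasurable (by fun_prop))).mul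
          (Continuous.aestronglyMeasurable (by fun_prop))
      have hbound : (∑' j : ℕ, ∫⁻ x, ‖F j x‖₊) ≠ ⊤ := by
        set G : ℕ → ℝ → ℝ :=
          fun j x => (|h x| * (x + k) ^ m) * ((8⁻¹ * (x + k)) ^ j / j !) with hG
        have hGnn : ∀ (j : ℕ) (x : ℝ), 0 ≤ G j x := by
          intro j x
          by_cases hx : 0 < x
          · have hxk : (0:ℝ) ≤ x + k := by linarith
            apply mul_nonneg (mul_nonneg (abs_nonneg _) (pow_nonneg hxk _))
            apply div_nonneg (pow_nonneg (by positivity) _) (by positivity)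
          · rw [hG]; simp [hsupp x (le_of_not_gt hx)]
        have hFG : ∀ (j : ℕ) (x : ℝ), (‖F j x‖₊ : ℝ≥0∞) ≤ ENNReal.ofReal (G j x) := by
          intro j x
          rw [← enorm_eq_nnnorm, Real.enorm_eq_ofReal_abs]
          apply ENNReal.ofReal_le_ofReal
          by_cases hx : 0 < x
          · have hxk : (0:ℝ) ≤ x + k := by linarith
            have e1 : |(-(8⁻¹ * (x + k))) ^ j / (j ! : ℝ)| = (8⁻¹ * (x + k)) ^ j / j ! := by
              rw [abs_div, abs_pow, abs_neg, abs_of_nonneg (by positivity),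
                abs_of_nonneg (by positivity : (0:ℝ) ≤ (j ! : ℝ))]
            have e2 : |Real.exp (-(8⁻¹ * ((n:ℝ) * (x + k)))) * (x + k) ^ m| ≤ (x + k) ^ m := by
              rw [abs_mul, abs_of_pos (Real.exp_pos _), abs_of_nonneg (pow_nonneg hxk m)]
              have h3 : Real.exp (-(8⁻¹ * ((n:ℝ) * (x + k)))) ≤ 1 := by
                rw [show (1:ℝ) = Real.exp 0 by rw [Real.exp_zero]]
                apply Real.exp_le_exp.2
                have : (0:ℝ) ≤ 8⁻¹ * ((n:ℝ) * (x + k)) := by positivity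
                linarith
              nlinarith [pow_nonneg hxk m, Real.exp_pos (-(8⁻¹ * ((n:ℝ) * (x + k))))]
            have hd : (0:ℝ) ≤ (8⁻¹ * (x + k)) ^ j / j ! :=
              div_nonneg (pow_nonneg (by positivity) _) (by positivity)
            have estep : |F j x| = |h x| * |Real.exp (-(8⁻¹ * ((n:ℝ) * (x + k)))) * (x + k) ^ m|
                * |(-(8⁻¹ * (x + k))) ^ j / (j ! : ℝ)| := by
              simp only [hFdef, hc]
              rw [abs_mul, abs_mul]
            rw [estep, e1]
            calc |h x| * |Real.exp (-(8⁻¹ * ((n:ℝ) * (x + k)))) * (x + k) ^ m|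
                  * ((8⁻¹ * (x + k)) ^ j / (j ! : ℝ))
                ≤ |h x| * (x + k) ^ m * ((8⁻¹ * (x + k)) ^ j / (j ! : ℝ)) :=
                  mul_le_mul_of_nonneg_right (mul_le_mul_of_nonneg_left e2 (abs_nonneg _)) hd
              _ = G j x := by rw [hG]
          · have hx0 : h x = 0 := hsupp x (le_of_not_gt hx)
            have hF0 : F j x = 0 := by simp [hFdef, hc, hx0]
            rw [hF0]
            simpa using hGnn j x
        have hGsum : ∀ x : ℝ, HasSum (fun j => G j x)
            ((|h x| * (x + k) ^ m) * Real.exp (8⁻¹ * (x + k))) :=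
          fun x => (hExp _).mul_left _
        have hGmeas : ∀ j : ℕ, AEMeasurable (fun x => ENNReal.ofReal (G j x)) volume := by
          intro j
          apply ENNReal.measurable_ofReal.comp_aemeasurable
          exact ((hmeas.norm.aemeasurable.mul
            ((continuous_id.add continuous_const).pow m).measurable.aemeasurable).mul
            (Continuous.measurable (by fun_prop)).aemeasurable)
        have hlt : (∑' j : ℕ, ∫⁻ x, ‖F j x‖₊) < ⊤ := by
          calc (∑' j : ℕ, ∫⁻ x, ‖F j x‖₊)
              ≤ ∑' j : ℕ, ∫⁻ x, ENNReal.ofReal (G j x) :=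
                ENNReal.tsum_le_tsum fun j => lintegral_mono fun x => hFG j x
            _ = ∫⁻ x, ∑' j : ℕ, ENNReal.ofReal (G j x) := (lintegral_tsum hGmeas).symm
            _ = ∫⁻ x, ENNReal.ofReal (|h x| * ((x + k) ^ m * Real.exp (8⁻¹ * (x + k)))) := by
                apply lintegral_congr fun x => ?_
                rw [← ENNReal.ofReal_tsum_of_nonneg (fun j => hGnn j x) (hGsum x).summable,
                  (hGsum x).tsum_eq, mul_assoc]
            _ < ⊤ := by
                have h4 := (I1 m).hasFiniteIntegral
                rw [HasFiniteIntegral] at h4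
                refine lt_of_le_of_lt (lintegral_mono fun x => ?_) h4
                rw [Real.enorm_eq_ofReal_abs]
                exact ENNReal.ofReal_le_ofReal (le_abs_self _)
        exact hlt.ne
      have hI : (∫ x, h x * (Real.exp (-(8⁻¹ * (((n:ℕ)+1 : ℕ) * (x + k)))) * (x + k) ^ m))
          = ∑' j : ℕ, ∫ x, F j x := by
        rw [← integral_tsum hmeasF hbound]
        exact integral_congr_ae (Eventually.of_forall fun x => ((hsum_pt x).tsum_eq).symm)
      rw [hI]
      have hz : ∀ j : ℕ, (∫ x, F j x) = 0 := by
        intro j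
        have h3 : ∀ x : ℝ, F j x = ((-8⁻¹ : ℝ) ^ j / j !)
            * (h x * (Real.exp (-(8⁻¹ * (n * (x + k)))) * (x + k) ^ (m + j))) := by
          intro x
          have e3 : (-(8⁻¹ * (x + k))) ^ j = (-8⁻¹ : ℝ) ^ j * (x + k) ^ j := by
            rw [show -(8⁻¹ * (x + k)) = (-8⁻¹ : ℝ) * (x + k) by ring, mul_pow]
          simp only [hFdef, hc]
          rw [e3, pow_add]
          ring
        rw [integral_congr_ae (Eventually.of_forall h3), integral_const_mul, ih (m + j), mul_zero]
      simp [hz]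
  -- exponential moments vanish
  have EXPN : ∀ n : ℕ, (∫ x, h x * Real.exp (-((n:ℝ) * x))) = 0 := by
    intro n
    have h1 := KEY (8 * n) 0
    have h2 : ∀ x : ℝ, h x * Real.exp (-((n:ℝ) * x))
        = Real.exp ((n:ℝ) * k)
          * (h x * (Real.exp (-(8⁻¹ * (((8 * n : ℕ) : ℝ) * (x + k)))) * (x + k) ^ 0)) := by
      intro x
      rw [pow_zero, mul_one]
      have he : Real.exp ((n:ℝ) * k) * Real.exp (-(8⁻¹ * (((8 * n : ℕ) : ℝ) * (x + k))))
          = Real.exp (-((n:ℝ) * x)) := by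
        rw [← Real.exp_add]; congr 1; push_cast; ring
      linear_combination (h x) * he.symm
    rw [integral_congr_ae (Eventually.of_forall h2), integral_const_mul, h1, mul_zero]
  -- integrals against polynomials in e^{-x} vanish
  have POLY : ∀ q : ℝ[X], (∫ x, h x * q.eval (Real.exp (-x))) = 0 := by
    intro q
    have h2 : ∀ x : ℝ, h x * q.eval (Real.exp (-x))
        = ∑ i ∈ Finset.range (q.natDegree + 1), h x * (q.coeff i * Real.exp (-x) ^ i) := by
      intro x
      rw [eval_eq_sum_range, Finset.mul_sum]
    have hIi : ∀ i : ℕ,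
        Integrable (fun x => h x * (q.coeff i * Real.exp (-x) ^ i)) volume := by
      intro i
      apply I2 _ (Continuous.aestronglyMeasurable (by fun_prop)) |q.coeff i| (abs_nonneg _)
      intro x hx
      rw [abs_mul, abs_pow, abs_of_pos (Real.exp_pos _)]
      have h3 : Real.exp (-x) ≤ 1 := by
        rw [show (1:ℝ) = Real.exp 0 by rw [Real.exp_zero]]
        exact Real.exp_le_exp.2 (by linarith)
      have h4 : Real.exp (-x) ^ i ≤ 1 := pow_le_one₀ (Real.exp_pos _).le h3
      nlinarith [abs_nonneg (q.coeff i), pow_nonneg (Real.exp_pos (-x)).le i]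
    rw [integral_congr_ae (Eventually.of_forall h2), integral_finset_sum _ (fun i _ => hIi i)]
    apply Finset.sum_eq_zero
    intro i _
    have h5 : ∀ x : ℝ, h x * (q.coeff i * Real.exp (-x) ^ i)
        = q.coeff i * (h x * Real.exp (-((i:ℝ) * x))) := by
      intro x
      rw [← Real.exp_nat_mul, show (i:ℝ) * -x = -((i:ℝ) * x) by ring]
      ring
    rw [integral_congr_ae (Eventually.of_forall h5), integral_const_mul, EXPN i, mul_zero]
  -- integrals against continuous compactly supported functions vanish
  have CCS : ∀ ψ : ℝ → ℝ, Continuous ψ → HasCompactSupport ψ → (∫ x, h x * ψ x) = 0 := by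
    intro ψ hψc hψs
    obtain ⟨r, hr⟩ := hψs.isBounded.subset_closedBall 0
    set A : ℝ := max r 0 + 1 with hA
    have hA0 : 0 < A := by positivity
    have hAz : ∀ x : ℝ, A ≤ |x| → ψ x = 0 := by
      intro x hx
      apply image_eq_zero_of_notMem_tsupport
      intro hmem
      have := hr hmem
      rw [Metric.mem_closedBall, Real.dist_eq, sub_zero] at this
      have : r ≤ max r 0 := le_max_left _ _
      linarith [le_max_left r 0]
    set Φ : ℝ → ℝ := fun y => ψ (-Real.log (max y (Real.exp (-A)))) with hΦ
    have hΦc : Continuous Φ := by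
      apply hψc.comp
      apply Continuous.neg
      apply Real.continuousOn_log.comp_continuous (continuous_id.max continuous_const)
      intro y
      exact ne_of_gt (lt_of_lt_of_le (Real.exp_pos _) (le_max_right _ _))
    have hkey : ∀ x : ℝ, 0 < x → Φ (Real.exp (-x)) = ψ x := by
      intro x hx
      by_cases hxA : x ≤ A
      · have hmax : max (Real.exp (-x)) (Real.exp (-A)) = Real.exp (-x) :=
          max_eq_left (Real.exp_le_exp.2 (by linarith))
        rw [hΦ]
        simp only []
        rw [hmax, Real.log_exp, neg_neg]
      · have hmax : max (Real.exp (-x)) (Real.exp (-A)) = Real.exp (-A) :=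
          max_eq_right (Real.exp_le_exp.2 (by linarith))
        rw [hΦ]
        simp only []
        rw [hmax, Real.log_exp, neg_neg]
        rw [hAz A (by rw [abs_of_pos hA0]), hAz x (by rw [abs_of_pos hx]; linarith)]
    -- Φ is bounded
    obtain ⟨Mψ, hMψ⟩ := hψc.bounded_above_of_compact_support hψs
    have hΦbd : ∀ y : ℝ, |Φ y| ≤ Mψ := fun y => hMψ _
    have hMψ0 : 0 ≤ Mψ := le_trans (abs_nonneg _) (hΦbd 0)
    have hI : Integrable (fun x => h x * Φ (Real.exp (-x))) volume :=
      I2 _ (Continuous.aestronglyMeasurable (hΦc.comp (by fun_prop))) Mψ hMψ0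
        (fun x _ => hΦbd _)
    have hrepr : (∫ x, h x * ψ x) = ∫ x, h x * Φ (Real.exp (-x)) := by
      apply integral_congr_ae (Eventually.of_forall fun x => ?_)
      by_cases hx : 0 < x
      · rw [hkey x hx]
      · rw [hsupp x (le_of_not_gt hx), zero_mul, zero_mul]
    -- epsilon of room
    have hbd : ∀ ε : ℝ, 0 < ε → |∫ x, h x * ψ x| ≤ (∫ x, |h x|) * ε := by
      intro ε hε
      obtain ⟨q, hq⟩ := exists_polynomial_near_of_continuousOn 0 1 Φ hΦc.continuousOn ε hε
      obtain ⟨Mq, hMq⟩ := (isCompact_Icc (a := (0:ℝ)) (b := 1)).exists_bound_of_continuousOn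
        (Continuous.continuousOn (by fun_prop : Continuous fun y : ℝ => q.eval y))
      have hmem : ∀ x : ℝ, 0 < x → Real.exp (-x) ∈ Icc (0:ℝ) 1 := by
        intro x hx
        refine ⟨(Real.exp_pos _).le, ?_⟩
        rw [show (1:ℝ) = Real.exp 0 by rw [Real.exp_zero]]
        exact Real.exp_le_exp.2 (by linarith)
      have hIq : Integrable (fun x => h x * q.eval (Real.exp (-x))) volume := by
        apply I2 _ (Continuous.aestronglyMeasurable (by fun_prop)) Mq
          (le_trans (norm_nonneg _) (hMq 0 ⟨le_rfl, zero_le_one⟩))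
        intro x hx
        exact hMq _ (hmem x hx)
      have hsplit : (∫ x, h x * Φ (Real.exp (-x)))
          = ∫ x, h x * (Φ (Real.exp (-x)) - q.eval (Real.exp (-x))) := by
        have := POLY q
        rw [show (fun x => h x * (Φ (Real.exp (-x)) - q.eval (Real.exp (-x))))
            = fun x => h x * Φ (Real.exp (-x)) - h x * q.eval (Real.exp (-x)) from
            funext fun x => by ring, integral_sub hI hIq, this, sub_zero]
      have hIabs : Integrable (fun x => |h x| * ε) volume := hh1.abs.mul_const ε
      have hnorm : ‖∫ x, h x * (Φ (Real.exp (-x)) - q.eval (Real.exp (-x)))‖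
          ≤ ∫ x, |h x| * ε := by
        refine norm_integral_le_of_norm_le hIabs (Eventually.of_forall fun x => ?_)
        rw [Real.norm_eq_abs, abs_mul]
        by_cases hx : 0 < x
        · apply mul_le_mul_of_nonneg_left _ (abs_nonneg _)
          rw [abs_sub_comm]
          exact (hq _ (hmem x hx)).le
        · rw [hsupp x (le_of_not_gt hx)]
          simp [mul_nonneg (abs_nonneg (h x)) hε.le]
      rw [Real.norm_eq_abs] at hnorm
      rw [hrepr, hsplit]
      calc |∫ x, h x * (Φ (Real.exp (-x)) - q.eval (Real.exp (-x)))|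
          ≤ ∫ x, |h x| * ε := hnorm
        _ = (∫ x, |h x|) * ε := integral_mul_const _ _
    have hz : (∫ x, h x * ψ x) = 0 := by
      by_contra hne
      have hpos : 0 < |∫ x, h x * ψ x| := abs_pos.2 hne
      set Cn : ℝ := ∫ x, |h x| with hCn
      have hCn0 : 0 ≤ Cn := integral_nonneg fun x => abs_nonneg _
      have := hbd (|∫ x, h x * ψ x| / (2 * (Cn + 1))) (by positivity)
      have hlt : Cn * (|∫ x, h x * ψ x| / (2 * (Cn + 1))) < |∫ x, h x * ψ x| := by
        rw [div_eq_mul_inv]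
        have h2 : Cn / (2 * (Cn + 1)) < 1 := by
          rw [div_lt_one (by positivity)]
          linarith
        calc Cn * (|∫ x, h x * ψ x| * (2 * (Cn + 1))⁻¹)
            = (Cn / (2 * (Cn + 1))) * |∫ x, h x * ψ x| := by ring
          _ < 1 * |∫ x, h x * ψ x| := by
              exact mul_lt_mul_of_pos_right h2 hpos
          _ = |∫ x, h x * ψ x| := one_mul _
      linarith
    exact hz
  -- conclude via distributions
  have := ae_eq_zero_of_integral_contDiff_smul_eq_zero (hh1.locallyIntegrable) ?_
  · exact this
  · intro g hg hgs
    have : (∫ x, g x • h x) = ∫ x, h x * g x :=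
      integral_congr_ae (Eventually.of_forall fun x => by
        show g x • h x = h x * g x
        rw [smul_eq_mul, mul_comm])
    rw [this]
    exact CCS g hg.continuous hgs


theorem main (k : ℝ) (hk : 0 < k) :
    Dense {f : Lp ℝ 2 (mu k) | ∃ p : Polynomial ℝ,
        (Polynomial.derivative p).eval (-k) - p.eval (-k) = 0 ∧
        ∀ᵐ x ∂(mu k), f x = p.eval x} := by
  classical
  set T : Submodule ℝ (Lp ℝ 2 (mu k)) :=
    { carrier := {f : Lp ℝ 2 (mu k) | ∃ p : Polynomial ℝ,
        (Polynomial.derivative p).eval (-k) - p.eval (-k) = 0 ∧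
        ∀ᵐ x ∂(mu k), f x = p.eval x},
      add_mem' := by
        rintro f g ⟨p, hp, hfp⟩ ⟨q, hq, hgq⟩
        refine ⟨p + q, by simp only [derivative_add, eval_add]; linarith, ?_⟩
        filter_upwards [hfp, hgq, Lp.coeFn_add f g] with x h1 h2 h3
        rw [h3, Pi.add_apply, h1, h2, eval_add]
      zero_mem' := by
        refine ⟨0, by simp, ?_⟩
        filter_upwards [Lp.coeFn_zero ℝ 2 (mu k)] with x h1
        rw [h1]
        simp
      smul_mem' := by
        rintro a f ⟨p, hp, hfp⟩
        refine ⟨a • p, by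
          simp only [derivative_smul, eval_smul, smul_eq_mul]
          linear_combination a * hp, ?_⟩
        filter_upwards [hfp, Lp.coeFn_smul a f] with x h1 h2
        rw [h2, Pi.smul_apply, h1, eval_smul, smul_eq_mul] } with hT
  show Dense (T : Set (Lp ℝ 2 (mu k)))
  rw [Submodule.dense_iff_topologicalClosure_eq_top,
    Submodule.topologicalClosure_eq_top_iff, Submodule.eq_bot_iff]
  intro g hg
  have hpolyL2 : ∀ p : Polynomial ℝ, MemLp (fun x => p.eval x) 2 (mu k) := by
    intro p
    exact memL2_of_growth hk p.continuous (polyexp_tendsto p (by norm_num))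
  have hmem : ∀ m : ℕ, ((hpolyL2 ((X + C k) ^ (m + 2))).toLp _) ∈ T := by
    intro m
    refine ⟨(X + C k) ^ (m + 2), ?_, MemLp.coeFn_toLp _⟩
    have h1 : Polynomial.eval (-k) ((X + C k) ^ (m + 2) : ℝ[X]) = 0 := by
      simp [eval_pow]
    have h2 : (derivative ((X + C k) ^ (m + 2) : ℝ[X])).eval (-k) = 0 := by
      rw [derivative_pow]
      simp [zero_pow]
    rw [h1, h2, sub_zero]
  rw [Submodule.mem_orthogonal] at hg
  set gr : ℝ → ℝ := ⇑g with hgr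
  have hmom' : ∀ m : ℕ, (∫ x, gr x * ((x + k) ^ 2 * (x + k) ^ m) ∂(mu k)) = 0 := by
    intro m
    have h1 := hg _ (hmem m)
    rw [L2.inner_def] at h1
    rw [← h1]
    apply integral_congr_ae
    filter_upwards [MemLp.coeFn_toLp (hpolyL2 ((X + C k) ^ (m + 2)))] with x h2
    rw [h2, RCLike.inner_apply, starRingEnd_apply, star_trivial]
    simp only [eval_pow, eval_add, eval_X, eval_C]
    rw [← pow_add]
    ring
  have hgsm : StronglyMeasurable gr := Lp.stronglyMeasurable g
  have hgL2 : MemLp gr 2 (mu k) := Lp.memLp g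
  have hzero : ∀ᵐ x,
      Set.indicator (Ioi 0) (fun y => gr y * (Real.exp (-y) * y ^ k)) x = 0 := by
    apply core hk
    · apply StronglyMeasurable.aestronglyMeasurable
      apply StronglyMeasurable.indicator _ measurableSet_Ioi
      exact hgsm.mul (Continuous.stronglyMeasurable
        ((Real.continuous_exp.comp continuous_neg).mul (Real.continuous_rpow_const hk.le)))
    · intro x hx
      apply Set.indicator_of_notMem
      simpa using not_lt.2 hx
    · intro m
      refine (transfer hk hgsm hgL2
        (v := fun x => (x + k) ^ m * Real.exp (8⁻¹ * x)) (by fun_prop) ?_).1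
      have h3 := polyexp_tendsto ((X + C k) ^ m) (b := 8⁻¹) (by norm_num)
      refine h3.congr fun x => ?_
      simp only [eval_pow, eval_add, eval_X, eval_C]
      have he : Real.exp (8⁻¹ * x) * Real.exp (-(4⁻¹ * x)) = Real.exp (-(8⁻¹ * x)) := by
        rw [← Real.exp_add]; congr 1; ring
      linear_combination ((x + k) ^ m) * he.symm
    · intro m
      have ht2 : Tendsto (fun x => ((x + k) ^ m : ℝ) * Real.exp (-(4⁻¹ * x))) atTop (nhds 0) := by
        have h3 := polyexp_tendsto ((X + C k) ^ m) (b := 4⁻¹) (by norm_num)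
        refine h3.congr fun x => ?_
        simp only [eval_pow, eval_add, eval_X, eval_C]
      rw [(transfer hk hgsm hgL2 (v := fun x => (x + k) ^ m) (by fun_prop) ht2).2]
      exact hmom' m
  have hgr0 : gr =ᵐ[mu k] 0 := by
    have h1 : ∀ᵐ x ∂(volume.restrict (Ioi (0:ℝ))),
        Set.indicator (Ioi 0) (fun y => gr y * (Real.exp (-y) * y ^ k)) x = 0 :=
      ae_restrict_of_ae hzero
    have h2 : ∀ᵐ x ∂(volume.restrict (Ioi (0:ℝ))), gr x = 0 := by
      rw [ae_restrict_iff' measurableSet_Ioi] at h1 ⊢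
      filter_upwards [h1] with x hx1 hx
      have h3 := hx1 hx
      rw [Set.indicator_of_mem hx] at h3
      have hx0 : (0:ℝ) < x := hx
      have hne : Real.exp (-x) * x ^ k ≠ 0 := by positivity
      rcases mul_eq_zero.1 h3 with h5 | h5
      · exact h5
      · exact absurd h5 hne
    have h6 := (withDensity_absolutelyContinuous
      (volume.restrict (Ioi (0:ℝ))) (fun x => ENNReal.ofReal (W k x))).ae_le h2
    exact h6
  exact Lp.eq_zero_iff_ae_eq_zero.2 hgr0

end Stmt3

end

/-- For k > 0, E^{-1,-k} = {p : p'(-k) - p(-k) = 0} is dense in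
L²([0,∞), Ŵ_k dx) with Ŵ_k(x) = e^{-x} x^k / (x+k)². -/
theorem stmt_3 (k : ℝ) (hk : 0 < k) :
    Dense {f : Lp ℝ 2
        ((volume.restrict (Set.Ioi (0 : ℝ))).withDensity
          (fun x => ENNReal.ofReal (Real.exp (-x) * x ^ k / (x + k) ^ 2))) |
      ∃ p : Polynomial ℝ,
        (Polynomial.derivative p).eval (-k) - p.eval (-k) = 0 ∧
        ∀ᵐ x ∂((volume.restrict (Set.Ioi (0 : ℝ))).withDensity
          (fun x => ENNReal.ofReal (Real.exp (-x) * x ^ k / (x + k) ^ 2))),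
          f x = p.eval x} := by
  exact Stmt3.main k hk
end

section
/- Let a,b be real with a ≠ 0, c = b + 1/a, let k_0 ≠ 0, k_1, k_2 be real constants, and define the operator T(y) = p(x) y'' + (q̃(x)/(x-b)) y' + (r̃(x)/(x-b)) y, where p(x) = k_2(x-b)^2 + k_1(x-b) + k_0, q̃(x) = a(x-c)(k_1(x-b) + 2k_0), r̃(x) = -a(k_1(x-b) + 2k_0). Then T maps the space E^{a,b}_n = {p ∈ P_n : p'(b) + a p(b) = 0} into itself for every n ≥ 1; in particular T applied to any polynomial in E^{a,b}_n is again a polynomial. -/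
open Polynomial

/-- The X₁ operator
T(y) = p(x) y'' + (q̃(x)/(x-b)) y' + (r̃(x)/(x-b)) y with
p = k₂(x-b)² + k₁(x-b) + k₀, q̃ = a(x-c)(k₁(x-b)+2k₀), r̃ = -a(k₁(x-b)+2k₀),
c = b + 1/a, maps E^{a,b}_n = {p ∈ P_n : p'(b) + a p(b) = 0} into itself for
every n ≥ 1; in particular T of any polynomial in E^{a,b}_n is a polynomial. -/
theorem stmt_4 (a b c k0 k1 k2 : ℝ) (ha : a ≠ 0) (hc : c = b + 1 / a)
    (hk0 : k0 ≠ 0) (n : ℕ) (hn : 1 ≤ n)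
    (y : Polynomial ℝ) (hdeg : y.natDegree ≤ n)
    (hy : (Polynomial.derivative y).eval b + a * y.eval b = 0) :
    ∃ z : Polynomial ℝ, z.natDegree ≤ n ∧
      (Polynomial.derivative z).eval b + a * z.eval b = 0 ∧
      ∀ x : ℝ, x ≠ b →
        z.eval x =
          (k2 * (x - b) ^ 2 + k1 * (x - b) + k0) *
              (Polynomial.derivative (Polynomial.derivative y)).eval x
          + (a * (x - c) * (k1 * (x - b) + 2 * k0)) / (x - b) *
              (Polynomial.derivative y).eval x
          + (-(a * (k1 * (x - b) + 2 * k0))) / (x - b) * y.eval x := by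
  set w : Polynomial ℝ := (X - C c) * derivative y - y with hw
  have hwb : w.eval b = 0 := by
    have hy' : (derivative y).eval b = -a * y.eval b := by linarith
    simp [hw, hc, hy']
    field_simp
    ring
  obtain ⟨u, hu⟩ := (dvd_iff_isRoot.mpr hwb : (X - C b) ∣ w)
  set P : Polynomial ℝ := C k2 * (X - C b)^2 + C k1 * (X - C b) + C k0 with hP
  have hPdeg : P.natDegree ≤ 2 := by rw [hP]; compute_degree
  refine ⟨P * derivative (derivative y) + C a * (C k1 * (X - C b) + C (2*k0)) * u, ?_, ?_, ?_⟩
  · -- degree bound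
    apply natDegree_add_le_of_degree_le
    · rcases eq_or_ne (derivative (derivative y)) 0 with h0 | h0
      · simp [h0]
      · have h1 : derivative y ≠ 0 := by
          intro h; simp [h] at h0
        have h2 : (derivative y).natDegree ≠ 0 := by
          intro h
          obtain ⟨r, hr⟩ := Polynomial.natDegree_eq_zero.mp h
          rw [← hr] at h0; simp at h0
        have h3 : (derivative y).natDegree ≤ y.natDegree - 1 := natDegree_derivative_le y
        have h4 : 2 ≤ y.natDegree := by omega
        calc (P * derivative (derivative y)).natDegree
            ≤ P.natDegree + (derivative (derivative y)).natDegree := natDegree_mul_le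
          _ ≤ 2 + (y.natDegree - 2) := by
              gcongr
              calc (derivative (derivative y)).natDegree
                  ≤ (derivative y).natDegree - 1 := natDegree_derivative_le _
                _ ≤ y.natDegree - 2 := by omega
          _ ≤ n := by omega
    · rcases eq_or_ne u 0 with h0 | h0
      · simp [h0]
      · have hwne : w ≠ 0 := by
          rw [hu]; exact mul_ne_zero (X_sub_C_ne_zero b) h0
        have hwdeg : w.natDegree ≤ n := by
          rw [hw]
          calc ((X - C c) * derivative y - y).natDegree
              ≤ max ((X - C c) * derivative y).natDegree y.natDegree := natDegree_sub_le _ _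
            _ ≤ n := by
                apply max_le _ hdeg
                calc ((X - C c) * derivative y).natDegree
                    ≤ (X - C c).natDegree + (derivative y).natDegree := natDegree_mul_le
                  _ ≤ 1 + (y.natDegree - 1) := by
                      gcongr
                      · simp
                      · exact natDegree_derivative_le y
                  _ ≤ n := by omega
        have h5 : w.natDegree = 1 + u.natDegree := by
          rw [hu, natDegree_mul (X_sub_C_ne_zero b) h0, natDegree_X_sub_C]
        have hudeg : u.natDegree ≤ n - 1 := by omega
        calc (C a * (C k1 * (X - C b) + C (2*k0)) * u).natDegree
            ≤ (C a * (C k1 * (X - C b) + C (2*k0))).natDegree + u.natDegree := natDegree_mul_le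
          _ ≤ 1 + (n-1) := by
              gcongr
              compute_degree
          _ ≤ n := by omega
  · -- boundary condition
    have hd1 : (X - C c) * derivative (derivative y) = u + (X - C b) * derivative u := by
      have h := congrArg derivative hu
      simp only [hw, derivative_sub, derivative_mul, derivative_X, derivative_C, sub_zero, one_mul] at h
      linear_combination h
    have hd2 : derivative (derivative y) + (X - C c) * derivative (derivative (derivative y))
        = derivative u + derivative u + (X - C b) * derivative (derivative u) := by
      have h := congrArg derivative hd1
      simp only [derivative_add, derivative_sub, derivative_mul, derivative_X, derivative_C, sub_zero, one_mul] at h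
      linear_combination h
    have e1 := congrArg (eval b) hd1
    have e2 := congrArg (eval b) hd2
    simp only [eval_add, eval_mul, eval_sub, eval_X, eval_C, sub_self, zero_mul, add_zero,
      mul_zero] at e1 e2
    have hbc : b - c = -(1/a) := by rw [hc]; ring
    rw [hbc] at e1 e2
    have hPb : P.eval b = k0 := by simp [hP]
    have hP'b : (derivative P).eval b = k1 := by
      simp [hP, derivative_pow]
    simp only [derivative_add, derivative_mul, derivative_C, derivative_X_sub_C, zero_mul,
      zero_add, mul_one, one_mul, add_zero, eval_add, eval_mul, eval_sub, eval_X, eval_C,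
      sub_self, mul_zero, hPb, hP'b]
    field_simp at e1 e2
    linear_combination (-(k1 + 2*a*k0)) * e1 + (-k0) * e2
  · -- pointwise evaluation
    intro x hx
    have hx' : x - b ≠ 0 := sub_ne_zero.mpr hx
    have hux : (x - b) * u.eval x = (x - c) * (derivative y).eval x - y.eval x := by
      have h := congrArg (eval x) hu
      simp only [hw, eval_sub, eval_mul, eval_X, eval_C] at h
      linarith
    have huval : u.eval x = ((x - c) * (derivative y).eval x - y.eval x) / (x - b) := by
      rw [eq_div_iff hx']; linarith [hux]
    simp only [eval_add, eval_mul, eval_sub, eval_X, eval_C, eval_pow, hP, huval]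
    field_simp
    ring
end

section
/- With T as in the general X_1 operator (p(x) = k_2(x-b)^2 + k_1(x-b) + k_0, k_0 ≠ 0, q̃(x) = a(x-c)(k_1(x-b)+2k_0), r̃(x) = -a(k_1(x-b)+2k_0), c = b+1/a), if y_n ∈ E^{a,b}_n is an eigenfunction of T of degree n ≥ 1, then the eigenvalue equals λ_n = (n-1)(n k_2 + a k_1). -/
open Polynomial

/-- With T the general X₁ operator, if y_n ∈ E^{a,b}_n is an
eigenfunction of T of degree n ≥ 1, then the eigenvalue equals
λ_n = (n-1)(n k₂ + a k₁). -/
theorem stmt_5 (a b c k0 k1 k2 : ℝ) (ha : a ≠ 0) (hc : c = b + 1 / a)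
    (hk0 : k0 ≠ 0) (n : ℕ) (hn : 1 ≤ n)
    (y : Polynomial ℝ) (hdeg : y.natDegree = n)
    (hy : (Polynomial.derivative y).eval b + a * y.eval b = 0)
    (lam : ℝ)
    (heig : ∀ x : ℝ, x ≠ b →
      (k2 * (x - b) ^ 2 + k1 * (x - b) + k0) *
          (Polynomial.derivative (Polynomial.derivative y)).eval x
        + (a * (x - c) * (k1 * (x - b) + 2 * k0)) / (x - b) *
            (Polynomial.derivative y).eval x
        + (-(a * (k1 * (x - b) + 2 * k0))) / (x - b) * y.eval x
        = lam * y.eval x) :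
    lam = ((n : ℝ) - 1) * ((n : ℝ) * k2 + a * k1) := by
  classical
  set z : Polynomial ℝ := y.comp (X + C b) with hzdef
  have hzdeg : z.natDegree = n := by
    rw [hzdef, natDegree_comp, natDegree_X_add_C, mul_one, hdeg]
  have hzne : z ≠ 0 := by
    intro h
    rw [h, natDegree_zero] at hzdeg
    omega
  have hLz : z.coeff n ≠ 0 := by
    rw [← hzdeg]
    exact mt leadingCoeff_eq_zero.mp hzne
  have hdz : derivative z = (derivative y).comp (X + C b) := by
    rw [hzdef, derivative_comp, derivative_X_add_C, one_mul]
  have hdz2 : derivative (derivative z) = (derivative (derivative y)).comp (X + C b) := by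
    rw [hdz, derivative_comp, derivative_X_add_C, one_mul]
  set Q : Polynomial ℝ :=
      (C k2 * derivative (derivative z)) * X ^ 3
    + (C k1 * derivative (derivative z)) * X ^ 2
    + (C k0 * derivative (derivative z)) * X
    + (C (a * k1) * derivative z) * X ^ 2
    + (C (2 * a * k0 - k1) * derivative z) * X
    + C (-(2 * k0)) * derivative z
    + (C (-(a * k1)) * z) * X
    + C (-(2 * a * k0)) * z
    + (C (-lam) * z) * X with hQdef
  have hQ0 : Q = 0 := by
    apply eq_zero_of_infinite_isRoot
    apply Set.Infinite.mono (s := {(0 : ℝ)}ᶜ) _ ((Set.finite_singleton (0 : ℝ)).infinite_compl)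
    intro t ht
    simp only [Set.mem_compl_iff, Set.mem_singleton_iff] at ht
    have h := heig (t + b) (by intro h; apply ht; linarith)
    simp only [add_sub_cancel_right, hc] at h
    show Q.IsRoot t
    have e0 : z.eval t = y.eval (t + b) := by
      rw [hzdef, eval_comp]; simp
    have e1 : (derivative z).eval t = (derivative y).eval (t + b) := by
      rw [hdz, eval_comp]; simp
    have e2 : (derivative (derivative z)).eval t =
        (derivative (derivative y)).eval (t + b) := by
      rw [hdz2, eval_comp]; simp
    simp only [IsRoot, hQdef, eval_add, eval_mul, eval_pow, eval_C, eval_X, e0, e1, e2]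
    field_simp at h
    linear_combination h
  have hco : Q.coeff (n + 1) = 0 := by rw [hQ0]; simp
  obtain ⟨m, rfl⟩ : ∃ m, n = m + 1 := ⟨n - 1, by omega⟩
  have hza : z.coeff (m + 2) = 0 := coeff_eq_zero_of_natDegree_lt (by omega)
  have hzb : z.coeff (m + 3) = 0 := coeff_eq_zero_of_natDegree_lt (by omega)
  have hzc : z.coeff (m + 4) = 0 := coeff_eq_zero_of_natDegree_lt (by omega)
  rcases m with _ | l
  · -- n = 1
    simp only [hQdef, coeff_add, coeff_mul_X_pow', coeff_mul_X, coeff_C_mul,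
      coeff_derivative, hza, hzb, hzc] at hco
    norm_num at hco ⊢
    rcases hco with h | h
    · exact h
    · exact absurd h hLz
  · -- n = l + 2
    simp only [hQdef, coeff_add, coeff_mul_X_pow', coeff_mul_X, coeff_C_mul,
      coeff_derivative] at hco
    have h3 : (3 : ℕ) ≤ l + 1 + 1 + 1 := by omega
    rw [if_pos h3] at hco
    have hsub : l + 1 + 1 + 1 - 3 = l := by omega
    rw [hsub] at hco
    norm_num at hco
    simp only [show l+1+1+1 = l+3 from rfl, show l+1+1 = l+2 from rfl, show l+1+2=l+3 from rfl, show l+1+3=l+4 from rfl, show l+1+4=l+5 from rfl, show l+2+1=l+3 from rfl, show l+2+2=l+4 from rfl, show l+3+1=l+4 from rfl] at hco hza hzb hzc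
    rw [hza, hzb] at hco
    have hLz' : z.coeff (l + 2) ≠ 0 := hLz
    have key : (lam - ((l : ℝ) + 1) * (((l : ℝ) + 2) * k2 + a * k1)) * z.coeff (l + 2) = 0 := by
      have hz3 : z.coeff (l + 1 + 1 + 1) = 0 := by
        rw [show l + 1 + 1 + 1 = l + 3 by omega]; exact hza
      push_cast at hco
      linear_combination -hco + ((l : ℝ) ^ 2 + 5 * (l : ℝ) + 6) * k1 * hz3
    have hfin := (mul_eq_zero.mp key).resolve_right hLz'
    push_cast
    linarith
end

section
/- For α,β > -1 with α ≠ β and sgn α = sgn β, with a = (β-α)/2, b = (β+α)/(β-α), c = b + 1/a, the weight Ŵ_{α,β}(x) = (1-x)^α (1+x)^β/(x-b)^2 satisfies Pearson's equation (p(x)W(x))' = q(x)W(x) on (-1,1), where p(x) = x^2 - 1 and q(x) = 2a(1-bx)(x-c)/(b-x). -/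
/-- For α,β > -1 with α ≠ β and sgn α = sgn β, with a = (β-α)/2,
b = (β+α)/(β-α), c = b + 1/a, the weight Ŵ_{α,β}(x) = (1-x)^α (1+x)^β/(x-b)²
satisfies Pearson's equation (p W)' = q W on (-1,1), where p(x) = x² - 1 and
q(x) = 2a(1-bx)(x-c)/(b-x). -/
theorem stmt_6 (α β a b c : ℝ) (hα : -1 < α) (hβ : -1 < β) (hne : α ≠ β)
    (hsgn : Real.sign α = Real.sign β)
    (hab : a = (β - α) / 2) (hbb : b = (β + α) / (β - α)) (hc : c = b + 1 / a) :
    ∀ x ∈ Set.Ioo (-1 : ℝ) 1,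
      HasDerivAt (fun t : ℝ => (t ^ 2 - 1) * ((1 - t) ^ α * (1 + t) ^ β / (t - b) ^ 2))
        (2 * a * (1 - b * x) * (x - c) / (b - x) *
          ((1 - x) ^ α * (1 + x) ^ β / (x - b) ^ 2)) x := by
  intro x hx
  obtain ⟨hx1, hx2⟩ := hx
  have h1 : (0:ℝ) < 1 - x := by linarith
  have h2 : (0:ℝ) < 1 + x := by linarith
  have hba : β - α ≠ 0 := sub_ne_zero.mpr (Ne.symm hne)
  -- α * β > 0
  have hαβ : 0 < α * β := by
    rcases lt_trichotomy α 0 with h | h | h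
    · rw [Real.sign_of_neg h] at hsgn
      rcases lt_trichotomy β 0 with h' | h' | h'
      · exact mul_pos_of_neg_of_neg h h'
      · rw [h', Real.sign_zero] at hsgn; norm_num at hsgn
      · rw [Real.sign_of_pos h'] at hsgn; norm_num at hsgn
    · rw [h, Real.sign_zero] at hsgn
      exact absurd (h.trans (Real.sign_eq_zero_iff.mp hsgn.symm).symm) hne
    · rw [Real.sign_of_pos h] at hsgn
      rcases lt_trichotomy β 0 with h' | h' | h'
      · rw [Real.sign_of_neg h'] at hsgn; norm_num at hsgn
      · rw [h', Real.sign_zero] at hsgn; norm_num at hsgn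
      · exact mul_pos h h'
  have hb2 : 1 < b ^ 2 := by
    rw [hbb, div_pow, lt_div_iff₀ (by positivity)]
    nlinarith
  have hxb : x - b ≠ 0 := by
    intro h
    have : x = b := by linarith
    nlinarith
  have hxb2 : (x - b) ^ 2 ≠ 0 := pow_ne_zero _ hxb
  have ha : a ≠ 0 := by rw [hab]; positivity
  -- derivatives of the individual factors
  have hA : HasDerivAt (fun t : ℝ => (1 - t) ^ α) (α * (1 - x) ^ (α - 1) * (-1)) x := by
    exact (Real.hasDerivAt_rpow_const (Or.inl h1.ne')).comp x
      (((hasDerivAt_id x).const_sub 1).congr_deriv rfl)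
  have hB : HasDerivAt (fun t : ℝ => (1 + t) ^ β) (β * (1 + x) ^ (β - 1) * 1) x := by
    exact (Real.hasDerivAt_rpow_const (Or.inl h2.ne')).comp x
      ((hasDerivAt_id x).const_add 1)
  have hP : HasDerivAt (fun t : ℝ => t ^ 2 - 1) (2 * x) x := by
    simpa using (hasDerivAt_pow 2 x).sub_const 1
  have hD : HasDerivAt (fun t : ℝ => (t - b) ^ 2) (2 * (x - b)) x := by
    refine ((hasDerivAt_pow 2 (x - b)).comp x ((hasDerivAt_id x).sub_const b)).congr_deriv ?_
    simp
  have hQ := ((hA.mul hB).div hD hxb2)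
  have hF := hP.mul hQ
  refine HasDerivAt.congr_deriv hF ?_
  simp only [Pi.mul_apply, Pi.div_apply]
  have e1 : (1 - x) ^ (α - 1) = (1 - x) ^ α / (1 - x) := by
    rw [Real.rpow_sub h1, Real.rpow_one]
  have e2 : (1 + x) ^ (β - 1) = (1 + x) ^ β / (1 + x) := by
    rw [Real.rpow_sub h2, Real.rpow_one]
  have hα' : α = a * (b - 1) := by
    rw [hab, hbb]; field_simp; ring
  have hβ' : β = a * (b + 1) := by
    rw [hab, hbb]; field_simp; ring
  rw [e1, e2, hc, hα', hβ']
  have hbx : b - x ≠ 0 := fun h => hxb (by linarith)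
  field_simp
  ring
end

section
/- For k > 0, define A_k(y) = -((x+k+1)/(x+k))(y' - y) - y and B_k(y) = x((x+k)/(x+k+1))(y' - y) + k y. Then T_k = B_k ∘ A_k, where T_k(y) = -x y'' + ((x-k)/(x+k))((x+k+1)y' - y). -/
/-- Lowering operator A_k(y) = -((x+k+1)/(x+k))(y' - y) - y. -/
noncomputable def lagA (k : ℝ) (y : ℝ → ℝ) : ℝ → ℝ :=
  fun x => -((x + k + 1) / (x + k)) * (deriv y x - y x) - y x

/-- Raising operator B_k(y) = x((x+k)/(x+k+1))(y' - y) + k y. -/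
noncomputable def lagB (k : ℝ) (y : ℝ → ℝ) : ℝ → ℝ :=
  fun x => x * ((x + k) / (x + k + 1)) * (deriv y x - y x) + k * y x

/-- X₁-Laguerre operator T_k(y) = -x y'' + ((x-k)/(x+k))((x+k+1)y' - y). -/
noncomputable def lagT (k : ℝ) (y : ℝ → ℝ) : ℝ → ℝ :=
  fun x => -x * deriv (deriv y) x + (x - k) / (x + k) * ((x + k + 1) * deriv y x - y x)

/-- For k > 0, T_k = B_k ∘ A_k as differential expressions on
twice-differentiable functions on (0,∞). -/
theorem stmt_8 (k : ℝ) (hk : 0 < k) (y : ℝ → ℝ) (hy : ContDiff ℝ 2 y) :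
    ∀ x ∈ Set.Ioi (0 : ℝ), lagB k (lagA k y) x = lagT k y x := by
  intro x hx
  simp only [Set.mem_Ioi] at hx
  have hxk : x + k ≠ 0 := by positivity
  have hxk1 : x + k + 1 ≠ 0 := by positivity
  have hy1 : Differentiable ℝ y := hy.differentiable (by norm_num)
  have hy2 : Differentiable ℝ (deriv y) :=
    (hy.iterate_deriv' 1 1).differentiable (by norm_num)
  -- derivative of lagA at x
  have hf : HasDerivAt (fun t => (t + k + 1) / (t + k))
      ((1 * (x + k) - (x + k + 1) * 1) / (x + k) ^ 2) x := by
    exact (((hasDerivAt_id x).add_const k).add_const 1).div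
      ((hasDerivAt_id x).add_const k) hxk
  have hg : HasDerivAt (fun t => deriv y t - y t)
      (deriv (deriv y) x - deriv y x) x :=
    (hy2 x).hasDerivAt.sub (hy1 x).hasDerivAt
  have hAe : lagA k y = fun t => -((t + k + 1) / (t + k) * (deriv y t - y t)) - y t := by
    funext t; simp [lagA, neg_mul]
  have hA : HasDerivAt (lagA k y)
      (-(((1 * (x + k) - (x + k + 1) * 1) / (x + k) ^ 2) * (deriv y x - y x)
        + ((x + k + 1) / (x + k)) * (deriv (deriv y) x - deriv y x)) - deriv y x) x := by
    rw [hAe]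
    exact ((hf.mul hg).neg).sub (hy1 x).hasDerivAt
  have hAd : deriv (lagA k y) x = (-(((1 * (x + k) - (x + k + 1) * 1) / (x + k) ^ 2) * (deriv y x - y x)
        + ((x + k + 1) / (x + k)) * (deriv (deriv y) x - deriv y x)) - deriv y x) := hA.deriv
  simp only [lagA, lagB, lagT, hAd]
  field_simp
  ring
end

section
/- For k > 0, with A_k and B_k defined by A_k(y) = -((x+k+1)/(x+k))(y'-y) - y and B_k(y) = x((x+k)/(x+k+1))(y'-y) + k y, the intertwining identity T_k = A_{k-1} ∘ B_{k-1} - 1 holds, where T_k(y) = -x y'' + ((x-k)/(x+k))((x+k+1)y' - y). -/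
/-- For k > 0, the intertwining identity T_k = A_{k-1} ∘ B_{k-1} - 1
holds as an identity of differential expressions with rational coefficients. -/
theorem stmt_9 (k : ℝ) (hk : 0 < k) (y : ℝ → ℝ) (hy : ContDiff ℝ 2 y) :
    ∀ x ∈ Set.Ioi (0 : ℝ), x + k - 1 ≠ 0 →
      lagT k y x = lagA (k - 1) (lagB (k - 1) y) x - y x := by
  intro x hx hxk1
  have hx0 : (0:ℝ) < x := hx
  have hxk : x + k ≠ 0 := by positivity
  have hdy : Differentiable ℝ y := hy.differentiable (by norm_num)
  have hy' : ContDiff ℝ 1 (deriv y) := by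
    have h2 : ContDiff ℝ ((1:ℕ∞)+1) y := by norm_num; exact hy
    exact (contDiff_succ_iff_deriv.mp h2).2.2
  have hdy2 : Differentiable ℝ (deriv y) := hy'.differentiable (by norm_num)
  -- derivative of lagB (k-1) y at x
  have h1 : HasDerivAt (fun t : ℝ => t * (t + (k-1))) (2*x + (k-1)) x := by
    have := (hasDerivAt_id x).mul ((hasDerivAt_id x).add_const (k-1))
    exact this.congr_deriv (by simp [id]; ring)
  have h2 : HasDerivAt (fun t : ℝ => t + (k-1) + 1) 1 x := by
    have := (hasDerivAt_id x).add_const ((k-1)+1)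
    have e : (fun t : ℝ => t + (k-1) + 1) = fun x => id x + (k - 1 + 1) := by
      funext t
      simp only [id]
      ring
    rw [e]; exact this
  have hxk' : x + (k-1) + 1 ≠ 0 := by
    intro h; apply hxk; linarith
  have h3 := h1.div h2 hxk'
  have h4 : HasDerivAt (fun t => deriv y t - y t)
      (deriv (deriv y) x - deriv y x) x :=
    ((hdy2 x).hasDerivAt).sub ((hdy x).hasDerivAt)
  have h5 := h3.mul h4
  have h6 := h5.add (((hdy x).hasDerivAt).const_mul (k-1))
  have hBeq : lagB (k-1) y = fun t =>
      (t * (t + (k-1)) / (t + (k-1) + 1)) * (deriv y t - y t) + (k-1) * y t := by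
    funext t; simp only [lagB]; ring
  have hB : deriv (lagB (k-1) y) x =
      ((2*x + (k-1)) * (x + (k-1) + 1) - x * (x + (k-1)) * 1) / (x + (k-1) + 1)^2
        * (deriv y x - y x)
      + (x * (x + (k-1)) / (x + (k-1) + 1)) * (deriv (deriv y) x - deriv y x)
      + (k-1) * deriv y x := by
    rw [hBeq]; exact h6.deriv
  have hxk1' : x + (k - 1) ≠ 0 := by intro h; apply hxk1; linarith
  simp only [lagT, lagA, lagB, hB]
  field_simp
  ring
end

section
/- For k > 0, A_k is adjoint to B_k in the sense that for all polynomials f, g: ∫_0^∞ A_k(f)(x) g(x) e^{-x} x^{k+1}/(x+k+1)^2 dx = ∫_0^∞ f(x) B_k(g)(x) e^{-x} x^k/(x+k)^2 dx. -/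
open MeasureTheory Polynomial Filter Topology Asymptotics

lemma aux_isBigO (P : Polynomial ℝ) (s : ℝ) :
    (fun x : ℝ => P.eval x * Real.exp (-x) * x ^ s) =O[atTop]
      fun x => Real.exp (-(2⁻¹) * x) := by
  have hP : (fun x : ℝ => P.eval x) =O[atTop] fun x => x ^ P.natDegree := by
    have := Polynomial.isBigO_of_degree_le (P := P) (Q := (X : Polynomial ℝ) ^ P.natDegree)
      (by simpa using Polynomial.degree_le_natDegree)
    simpa using this
  have h2 : (fun x : ℝ => x ^ ((P.natDegree : ℝ) + s)) =o[atTop]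
      fun x => Real.exp (2⁻¹ * x) := isLittleO_rpow_exp_pos_mul_atTop _ (by norm_num)
  have h3 : (fun x : ℝ => P.eval x * x ^ s) =O[atTop]
      fun x => x ^ ((P.natDegree : ℝ) + s) := by
    refine (hP.mul (isBigO_refl (fun x : ℝ => x ^ s) atTop)).trans (IsBigO.of_bound 1 ?_)
    filter_upwards [eventually_gt_atTop (0:ℝ)] with x hx
    rw [Real.rpow_add hx, Real.rpow_natCast]
    simp
  have h4 : (fun x : ℝ => P.eval x * x ^ s * Real.exp (-x)) =O[atTop]
      fun x => Real.exp (2⁻¹ * x) * Real.exp (-x) :=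
    (h3.trans h2.isBigO).mul (isBigO_refl _ _)
  have h5 : (fun x : ℝ => Real.exp (2⁻¹ * x) * Real.exp (-x)) =ᶠ[atTop]
      fun x => Real.exp (-(2⁻¹) * x) := by
    filter_upwards with x
    rw [← Real.exp_add]; ring_nf
  refine ((h4.trans h5.isBigO).congr_left fun x => by ring)

lemma aux_tendsto (P : Polynomial ℝ) (s : ℝ) :
    Tendsto (fun x : ℝ => P.eval x * Real.exp (-x) * x ^ s) atTop (𝓝 0) := by
  refine (aux_isBigO P s).trans_tendsto ?_
  have : Tendsto (fun x : ℝ => -(2⁻¹) * x) atTop atBot := by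
    apply Tendsto.const_mul_atTop_of_neg (by norm_num) tendsto_id
  exact Real.tendsto_exp_atBot.comp this

lemma aux_integrable (P : Polynomial ℝ) (s : ℝ) (hs : 0 < s) :
    IntegrableOn (fun x : ℝ => P.eval x * Real.exp (-x) * x ^ s) (Set.Ioi 0) := by
  refine integrable_of_isBigO_exp_neg (by norm_num : (0:ℝ) < 2⁻¹) ?_
    (by simpa using aux_isBigO P s)
  apply ContinuousOn.mul ((P.continuous.mul (Real.continuous_exp.comp continuous_neg)).continuousOn)
  intro x hx
  exact (Real.continuousAt_rpow_const x s (Or.inr hs.le)).continuousWithinAt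

lemma aux_integrable2 (N : Polynomial ℝ) (s k : ℝ) (hs : 0 < s) (hk : 0 < k) :
    IntegrableOn
      (fun x : ℝ => N.eval x * Real.exp (-x) * x ^ s / ((x + k) ^ 2 * (x + k + 1) ^ 2))
      (Set.Ioi 0) := by
  have hint := ((aux_integrable N s hs).norm.const_mul ((k ^ 2 * (k + 1) ^ 2)⁻¹))
  refine hint.mono' ?_ ?_
  · refine ContinuousOn.aestronglyMeasurable ?_ measurableSet_Ioi
    apply ContinuousOn.div
    · apply ContinuousOn.mul ((N.continuous.mul
        (Real.continuous_exp.comp continuous_neg)).continuousOn)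
      intro x hx
      exact (Real.continuousAt_rpow_const x s (Or.inl (ne_of_gt hx))).continuousWithinAt
    · fun_prop
    · intro x hx
      have hx' : (0:ℝ) < x := hx
      positivity
  · filter_upwards [ae_restrict_mem measurableSet_Ioi] with x hx
    have hx' : (0:ℝ) < x := hx
    have hD0 : (0:ℝ) < k ^ 2 * (k + 1) ^ 2 := by positivity
    have hD : k ^ 2 * (k + 1) ^ 2 ≤ (x + k) ^ 2 * (x + k + 1) ^ 2 := by
      gcongr <;> nlinarith
    rw [Real.norm_eq_abs, abs_div, abs_of_pos (lt_of_lt_of_le hD0 hD)]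
    rw [inv_mul_eq_div]
    exact div_le_div_of_nonneg_left (abs_nonneg _) hD0 hD |>.trans_eq (by rw [Real.norm_eq_abs])

section main
variable (k : ℝ) (f g : Polynomial ℝ)

noncomputable def F1aux : ℝ → ℝ := fun x =>
  lagA k (fun t => f.eval t) x * g.eval x *
    (Real.exp (-x) * x ^ (k + 1) / (x + k + 1) ^ 2)

noncomputable def F2aux : ℝ → ℝ := fun x =>
  f.eval x * lagB k (fun t => g.eval t) x *
    (Real.exp (-x) * x ^ k / (x + k) ^ 2)

noncomputable def N1aux : Polynomial ℝ :=
  (-(X + C (k + 1)) * (derivative f - f) - (X + C k) * f) * g * (X + C k)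

noncomputable def N2aux : Polynomial ℝ :=
  f * (X * (X + C k) * (derivative g - g) + C k * (X + C (k + 1)) * g) * (X + C (k + 1))

noncomputable def Haux : ℝ → ℝ := fun x =>
  f.eval x * g.eval x * Real.exp (-x) * x ^ (k + 1) / ((x + k) * (x + k + 1))

lemma hEq1 (hk : 0 < k) : Set.EqOn
    (fun x : ℝ => (N1aux k f g).eval x * Real.exp (-x) * x ^ (k + 1) /
      ((x + k) ^ 2 * (x + k + 1) ^ 2))
    (F1aux k f g) (Set.Ioi 0) := by
  intro x hx
  have hx' : (0:ℝ) < x := hx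
  have h1 : x + k ≠ 0 := by positivity
  have h2 : x + k + 1 ≠ 0 := by positivity
  simp only [F1aux, lagA, Polynomial.deriv, N1aux, eval_mul, eval_sub, eval_add,
    eval_neg, eval_X, eval_C]
  field_simp
  ring

lemma hEq2 (hk : 0 < k) : Set.EqOn
    (fun x : ℝ => (N2aux k f g).eval x * Real.exp (-x) * x ^ k /
      ((x + k) ^ 2 * (x + k + 1) ^ 2))
    (F2aux k f g) (Set.Ioi 0) := by
  intro x hx
  have hx' : (0:ℝ) < x := hx
  have h1 : x + k ≠ 0 := by positivity
  have h2 : x + k + 1 ≠ 0 := by positivity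
  simp only [F2aux, lagB, Polynomial.deriv, N2aux, eval_mul, eval_sub, eval_add,
    eval_X, eval_C]
  field_simp
  ring

lemma hDeriv (hk : 0 < k) : ∀ x ∈ Set.Ioi (0:ℝ),
    HasDerivAt (Haux k f g) (F2aux k f g x - F1aux k f g x) x := by
  intro x hx
  have hx' : (0:ℝ) < x := hx
  have h1 : x + k ≠ 0 := by positivity
  have h2 : x + k + 1 ≠ 0 := by positivity
  have hexp : HasDerivAt (fun x : ℝ => Real.exp (-x)) (-Real.exp (-x)) x := by
    simpa [Function.comp_def] using (Real.hasDerivAt_exp (-x)).comp x (hasDerivAt_neg x)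
  have hrpow : HasDerivAt (fun x : ℝ => x ^ (k + 1)) ((k + 1) * x ^ k) x := by
    have := Real.hasDerivAt_rpow_const (x := x) (p := k + 1) (Or.inl hx'.ne')
    simpa using this
  have hu : HasDerivAt (fun x : ℝ => f.eval x * g.eval x * Real.exp (-x) * x ^ (k + 1))
      ((((f.derivative.eval x * g.eval x + f.eval x * g.derivative.eval x) * Real.exp (-x)
        + f.eval x * g.eval x * -Real.exp (-x)) * x ^ (k + 1))
        + f.eval x * g.eval x * Real.exp (-x) * ((k + 1) * x ^ k)) x :=
    (((f.hasDerivAt x).mul (g.hasDerivAt x)).mul hexp).mul hrpow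
  have hv : HasDerivAt (fun x : ℝ => (x + k) * (x + k + 1))
      (1 * (x + k + 1) + (x + k) * 1) x := by
    exact (((hasDerivAt_id x).add_const k)).mul
      (((hasDerivAt_id x).add_const k).add_const 1)
  have hv0 : (x + k) * (x + k + 1) ≠ 0 := mul_ne_zero h1 h2
  have := hu.div hv hv0
  refine HasDerivAt.congr_deriv (this : HasDerivAt (Haux k f g) _ x) ?_
  symm
  simp only [F1aux, F2aux, lagA, lagB, Polynomial.deriv]
  have hxk : x ^ (k + 1) = x ^ k * x := Real.rpow_add_one hx'.ne' k
  rw [hxk]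
  field_simp
  ring


lemma hCont (hk : 0 < k) : ContinuousWithinAt (Haux k f g) (Set.Ici 0) 0 := by
  apply ContinuousAt.continuousWithinAt
  have hd : ((0:ℝ) + k) * (0 + k + 1) ≠ 0 := by positivity
  exact (((((f.continuous.mul g.continuous).mul
      (Real.continuous_exp.comp continuous_neg)).continuousAt).mul
      (Real.continuousAt_rpow_const 0 (k + 1) (Or.inr (by linarith)))).div
      (by fun_prop) hd)

lemma hH0 (hk : 0 < k) : Haux k f g 0 = 0 := by
  simp [Haux, Real.zero_rpow (by positivity : k + 1 ≠ 0)]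

lemma hTop (hk : 0 < k) : Filter.Tendsto (Haux k f g) atTop (𝓝 0) := by
  refine squeeze_zero_norm' (a := fun x =>
    (k * (k + 1))⁻¹ * ‖(f * g).eval x * Real.exp (-x) * x ^ (k + 1)‖) ?_ ?_
  · filter_upwards [eventually_gt_atTop (0:ℝ)] with x hx
    have h1 : (0:ℝ) < x + k := by positivity
    have h2 : (0:ℝ) < x + k + 1 := by positivity
    have hD0 : (0:ℝ) < k * (k + 1) := by positivity
    have hD : k * (k + 1) ≤ (x + k) * (x + k + 1) := by nlinarith
    simp only [Haux, eval_mul]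
    rw [Real.norm_eq_abs, abs_div, abs_of_pos (lt_of_lt_of_le hD0 hD), inv_mul_eq_div]
    exact (div_le_div_of_nonneg_left (abs_nonneg _) hD0 hD).trans_eq (by rw [Real.norm_eq_abs])
  · have := (aux_tendsto (f * g) (k + 1))
    simpa using (this.norm.const_mul ((k * (k + 1))⁻¹))

lemma hI1 (hk : 0 < k) : IntegrableOn (F1aux k f g) (Set.Ioi 0) :=
  (aux_integrable2 (N1aux k f g) (k + 1) k (by linarith) hk).congr_fun
    (hEq1 k f g hk) measurableSet_Ioi

lemma hI2 (hk : 0 < k) : IntegrableOn (F2aux k f g) (Set.Ioi 0) :=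
  (aux_integrable2 (N2aux k f g) k k hk hk).congr_fun (hEq2 k f g hk) measurableSet_Ioi

end main

/-- For k > 0 and polynomials f, g:
∫₀^∞ A_k(f) g Ŵ_{k+1} dx = ∫₀^∞ f B_k(g) Ŵ_k dx, where
Ŵ_k(x) = e^{-x} x^k/(x+k)². -/
theorem stmt_10 (k : ℝ) (hk : 0 < k) (f g : Polynomial ℝ) :
    ∫ x in Set.Ioi (0 : ℝ),
        lagA k (fun t => f.eval t) x * g.eval x *
          (Real.exp (-x) * x ^ (k + 1) / (x + k + 1) ^ 2) =
    ∫ x in Set.Ioi (0 : ℝ),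
        f.eval x * lagB k (fun t => g.eval t) x *
          (Real.exp (-x) * x ^ k / (x + k) ^ 2) := by
  change (∫ x in Set.Ioi (0:ℝ), F1aux k f g x) = ∫ x in Set.Ioi (0:ℝ), F2aux k f g x
  have key := integral_Ioi_of_hasDerivAt_of_tendsto (hCont k f g hk) (hDeriv k f g hk)
    ((hI2 k f g hk).sub (hI1 k f g hk)) (hTop k f g hk)
  rw [hH0 k f g hk, integral_sub (hI2 k f g hk) (hI1 k f g hk)] at key
  linarith
end

section
/- For k > 0 and n ≥ 1, define the X_1-Laguerre polynomial L̂_n^k(x) = -(x+k+1)L_{n-1}^{(k)}(x) + L_{n-2}^{(k)}(x), where L_m^{(k)} are the classical generalized Laguerre polynomials (with L_{-1}^{(k)} = 0). Then T_k(L̂_n^k) = (n-1) L̂_n^k, where T_k(y) = -x y'' + ((x-k)/(x+k))((x+k+1)y' - y). -/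
open Polynomial

/-- Classical generalized Laguerre polynomials L_n^{(k)}, defined by the
three-term recurrence (n+2) L_{n+2} = (2n+k+3 - x) L_{n+1} - (n+1+k) L_n,
with L_0 = 1, L_1 = k + 1 - x. -/
noncomputable def genLaguerre (k : ℝ) : ℕ → Polynomial ℝ
  | 0 => 1
  | 1 => Polynomial.C (k + 1) - Polynomial.X
  | n + 2 =>
      Polynomial.C (1 / ((n : ℝ) + 2)) *
        ((Polynomial.C (2 * (n : ℝ) + k + 3) - Polynomial.X) * genLaguerre k (n + 1)
          - Polynomial.C ((n : ℝ) + 1 + k) * genLaguerre k n)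

/-- X₁-Laguerre polynomial L̂_n^k = -(x+k+1) L_{n-1}^{(k)} + L_{n-2}^{(k)},
with the convention L_{-1}^{(k)} = 0 (so the last term is absent for n = 1). -/
noncomputable def hatL (k : ℝ) (n : ℕ) : Polynomial ℝ :=
  -(Polynomial.X + Polynomial.C (k + 1)) * genLaguerre k (n - 1)
    + if 2 ≤ n then genLaguerre k (n - 2) else 0

lemma genLaguerre_rec (k : ℝ) (n : ℕ) :
    C ((n : ℝ) + 2) * genLaguerre k (n + 2)
      = (C (2 * (n : ℝ) + k + 3) - X) * genLaguerre k (n + 1)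
        - C ((n : ℝ) + 1 + k) * genLaguerre k n := by
  have h : ((n : ℝ) + 2) ≠ 0 := by positivity
  rw [genLaguerre, ← mul_assoc, ← C_mul, mul_one_div, div_self h, C_1, one_mul]

lemma key (k : ℝ) : ∀ m : ℕ,
    derivative (genLaguerre k (m + 1))
        = derivative (genLaguerre k m) - genLaguerre k m ∧
      C ((m : ℝ) + 1) * genLaguerre k (m + 1)
        = X * derivative (genLaguerre k m)
          + (C ((m : ℝ) + 1 + k) - X) * genLaguerre k m := by
  intro m
  induction m with
  | zero =>
    constructor
    · simp [genLaguerre]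
    · simp [genLaguerre]; ring
  | succ m ih =>
    obtain ⟨ihD, ihX⟩ := ih
    have hrec := genLaguerre_rec k m
    have hrecD : C ((m : ℝ) + 2) * derivative (genLaguerre k (m + 2))
        = - genLaguerre k (m + 1)
          + (C (2 * (m : ℝ) + k + 3) - X) * derivative (genLaguerre k (m + 1))
          - C ((m : ℝ) + 1 + k) * derivative (genLaguerre k m) := by
      have h := congrArg derivative hrec
      simp only [derivative_mul, derivative_sub, derivative_C, derivative_X] at h
      linear_combination h
    have hc : (C ((m : ℝ) + 2) : Polynomial ℝ) ≠ 0 := by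
      rw [Ne, C_eq_zero]; positivity
    have hD : derivative (genLaguerre k (m + 2))
        = derivative (genLaguerre k (m + 1)) - genLaguerre k (m + 1) := by
      apply mul_left_cancel₀ hc
      linear_combination (norm := (simp only [map_add, map_mul, map_ofNat, map_one]; ring)) hrecD + (C ((m : ℝ) + 1 + k) - X) * ihD + ihX
    refine ⟨by push_cast; exact hD, ?_⟩
    push_cast
    apply mul_left_cancel₀ hc
    have goal2 : C ((m : ℝ) + 2) * (C ((m : ℝ) + 1 + 1) * genLaguerre k (m + 2))
        = C ((m : ℝ) + 2) * (X * derivative (genLaguerre k (m + 1))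
          + (C ((m : ℝ) + 1 + 1 + k) - X) * genLaguerre k (m + 1)) := by
      linear_combination (norm := (simp only [map_add, map_mul, map_ofNat, map_one]; ring)) (C ((m:ℝ)+2)) * hrec - (C ((m:ℝ)+2)) * X * ihD + (C ((m:ℝ)+2)) * ihX
    convert goal2 using 2 <;> push_cast <;> ring

lemma lagODE (k : ℝ) (m : ℕ) :
    X * derivative (derivative (genLaguerre k m))
      + (C (k + 1) - X) * derivative (genLaguerre k m)
      + C (m : ℝ) * genLaguerre k m = 0 := by
  obtain ⟨hD, hX⟩ := key k m
  have h := congrArg derivative hX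
  simp only [derivative_mul, derivative_add, derivative_sub, derivative_C, derivative_X] at h
  linear_combination (norm := (simp only [map_add, map_mul, map_ofNat, map_one]; ring))
    C ((m : ℝ) + 1) * hD - h

/-- For k > 0 and n ≥ 1, the X₁-Laguerre polynomial L̂_n^k
satisfies T_k(L̂_n^k) = (n-1) L̂_n^k, where
T_k(y) = -x y'' + ((x-k)/(x+k))((x+k+1)y' - y). -/
theorem stmt_11 (k : ℝ) (hk : 0 < k) (n : ℕ) (hn : 1 ≤ n) :
    ∀ x : ℝ, x ≠ -k →
      -x * (Polynomial.derivative (Polynomial.derivative (hatL k n))).eval x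
        + (x - k) / (x + k) *
            ((x + k + 1) * (Polynomial.derivative (hatL k n)).eval x - (hatL k n).eval x)
        = ((n : ℝ) - 1) * (hatL k n).eval x := by
  match n, hn with
  | 1, _ =>
    have h1 : hatL k 1 = -(X + C (k + 1)) := by simp [hatL, genLaguerre]
    intro x hx
    rw [h1]
    simp
    right; ring
  | (m + 2), _ =>
    have hE : hatL k (m + 2)
        = -(X + C (k + 1)) * genLaguerre k (m + 1) + genLaguerre k m := by
      simp [hatL]
    have hE1 : derivative (hatL k (m + 2))
        = -genLaguerre k (m + 1) - (X + C (k + 1)) * derivative (genLaguerre k (m + 1))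
          + derivative (genLaguerre k m) := by
      rw [hE]
      simp only [derivative_add, derivative_mul, derivative_neg, derivative_X, derivative_C]
      ring
    have hE2 : derivative (derivative (hatL k (m + 2)))
        = -(2 : Polynomial ℝ) * derivative (genLaguerre k (m + 1))
          - (X + C (k + 1)) * derivative (derivative (genLaguerre k (m + 1)))
          + derivative (derivative (genLaguerre k m)) := by
      rw [hE1]
      simp only [derivative_add, derivative_sub, derivative_mul, derivative_neg,
        derivative_X, derivative_C]
      ring
    have hD := (key k m).1
    have ode1 := lagODE k (m + 1)
    have ode0 := lagODE k m
    have polyid : -(X * (X + C k)) * derivative (derivative (hatL k (m + 2)))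
        + (X - C k) * ((X + C k + 1) * derivative (hatL k (m + 2)) - hatL k (m + 2))
        = C ((m : ℝ) + 1) * ((X + C k) * hatL k (m + 2)) := by
      rw [hE2, hE1, hE]
      linear_combination (norm := (push_cast; simp only [map_add, map_mul, map_ofNat, map_one]; ring))
        (X + C k) * (X + C (k + 1)) * ode1 - (X + C k) * ode0 - 2 * X * hD
    intro x hx
    have hxk : x + k ≠ 0 := fun h => hx (by linarith)
    have hv := congrArg (eval x) polyid
    simp only [eval_add, eval_mul, eval_sub, eval_neg, eval_X, eval_C, eval_one,
      eval_ofNat] at hv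
    push_cast
    field_simp
    linear_combination hv
end

section
/- For k > 0 and all n ≥ 1, the X_1-Laguerre polynomial L̂_n^k does not vanish at x = -k, i.e. L̂_n^k(-k) ≠ 0. -/
open Polynomial

lemma genLaguerre_pos_mono (k : ℝ) (hk : 0 < k) (n : ℕ) :
    0 < (genLaguerre k n).eval (-k) ∧
      (genLaguerre k n).eval (-k) < (genLaguerre k (n + 1)).eval (-k) := by
  induction n with
  | zero =>
    simp only [genLaguerre, eval_one, eval_sub, eval_C, eval_X]
    constructor <;> linarith
  | succ n ih =>
    obtain ⟨h0, h1⟩ := ih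
    have hp : 0 < (genLaguerre k (n + 1)).eval (-k) := lt_trans h0 h1
    refine ⟨hp, ?_⟩
    show (genLaguerre k (n + 1)).eval (-k) < (genLaguerre k (n + 2)).eval (-k)
    have heq : (genLaguerre k (n + 2)).eval (-k) =
        (1 / ((n : ℝ) + 2)) * ((2 * (n : ℝ) + k + 3 + k) * (genLaguerre k (n + 1)).eval (-k)
          - ((n : ℝ) + 1 + k) * (genLaguerre k n).eval (-k)) := by
      show (Polynomial.C (1 / ((n : ℝ) + 2)) *
        ((Polynomial.C (2 * (n : ℝ) + k + 3) - Polynomial.X) * genLaguerre k (n + 1)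
          - Polynomial.C ((n : ℝ) + 1 + k) * genLaguerre k n)).eval (-k) = _
      simp only [eval_mul, eval_sub, eval_C, eval_X]
      ring
    rw [heq]
    have hn2 : (0 : ℝ) < (n : ℝ) + 2 := by positivity
    rw [div_mul_eq_mul_div, one_mul, lt_div_iff₀ hn2]
    nlinarith [h0, h1, hp, hk]

/-- For k > 0 and all n ≥ 1, the X₁-Laguerre polynomial does not
vanish at x = -k. -/
theorem stmt_19 (k : ℝ) (hk : 0 < k) (n : ℕ) (hn : 1 ≤ n) :
    (hatL k n).eval (-k) ≠ 0 := by
  have hcoef : (-(Polynomial.X + Polynomial.C (k + 1)) : Polynomial ℝ).eval (-k) = -1 := by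
    simp
  match n, hn with
  | 1, _ =>
    have h0 := (genLaguerre_pos_mono k hk 0).1
    simp only [hatL, eval_add, eval_mul, hcoef]
    norm_num
    linarith
  | (m + 2), _ =>
    have h := genLaguerre_pos_mono k hk m
    simp only [hatL, eval_add, eval_mul, hcoef, show m + 2 - 1 = m + 1 from rfl,
      show m + 2 - 2 = m from rfl, if_pos (by omega : 2 ≤ m + 2)]
    intro hc
    have := h.2
    nlinarith
end
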